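/- arXiv:2405.11648 — 12 statements merged into one kernel-verified Lean document; each statement's English description precedes it below -/
import Mathlib

section
/- Let (X,G) be a complete G-metric space with at least 3 elements, and let T : X → X be a mapping such that (I) for all x ∈ X, if Tx ≠ x then T(Tx) ≠ x, and (II) there exists a constant λ ∈ (0,1) such that G(Tx,Ty,Tz) ≤ λ·G(x,y,z) for all pairwise distinct points x, y, z ∈ X. Then T has at least one fixed point, and T has at most two fixed points. -/
open Filter

/-- A G-metric on `X` in the sense of Mustafa and Sims: (P1) `G x y z = 0` iff `x = y = z`;
(P2) `G x x y > 0` if `x ≠ y`; (P3) invariance under all permutations of the arguments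
(generated by the two swaps below); (P4) `G x x y ≤ G x y z` if `y ≠ z`;
(P5) `G x y z ≤ G x w w + G w y z`. The codomain is `[0, ∞)`, encoded by `nonneg`. -/
structure IsGMetric {X : Type*} (G : X → X → X → ℝ) : Prop where
  nonneg : ∀ x y z, 0 ≤ G x y z
  eq_zero_iff : ∀ x y z, G x y z = 0 ↔ x = y ∧ y = z
  pos_of_ne : ∀ x y, x ≠ y → 0 < G x x y
  swap_left : ∀ x y z, G x y z = G y x z
  swap_right : ∀ x y z, G x y z = G x z y
  le_of_ne : ∀ x y z, y ≠ z → G x x y ≤ G x y z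
  triangle : ∀ x y z w, G x y z ≤ G x w w + G w y z

/-- A sequence `u` is `G`-Cauchy if `G (u n) (u m) (u m) → 0` as `n, m → ∞`. -/
def GCauchy {X : Type*} (G : X → X → X → ℝ) (u : ℕ → X) : Prop :=
  Tendsto (fun p : ℕ × ℕ => G (u p.1) (u p.2) (u p.2)) atTop (nhds 0)

/-- A sequence `u` is `G`-convergent to `x` if `G (u n) x x → 0` as `n → ∞`. -/
def GConvergent {X : Type*} (G : X → X → X → ℝ) (u : ℕ → X) (x : X) : Prop :=
  Tendsto (fun n => G (u n) x x) atTop (nhds 0)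

/-- `(X, G)` is complete if every `G`-Cauchy sequence is `G`-convergent to some point. -/
def GComplete {X : Type*} (G : X → X → X → ℝ) : Prop :=
  ∀ u : ℕ → X, GCauchy G u → ∃ x, GConvergent G u x

/-- Symmetry-type inequality: `G x y y ≤ 2 * G y x x`. -/
lemma IsGMetric.symm_le {X : Type*} {G : X → X → X → ℝ} (hG : IsGMetric G) (x y : X) :
    G x y y ≤ 2 * G y x x := by
  have h1 : G x y y = G y y x := by rw [hG.swap_left x y y, hG.swap_right y x y]
  have h2 := hG.triangle y y x x
  have h3 : G x y x = G y x x := hG.swap_left x y x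
  linarith

/-- Banach fixed point theorem in G-metric spaces (Theorem 3.1). -/
theorem banach_fixedPoint_GMetric {X : Type*} [Nonempty X] (G : X → X → X → ℝ)
    (hG : IsGMetric G) (hcomp : GComplete G)
    (hcard : ∃ a b c : X, a ≠ b ∧ a ≠ c ∧ b ≠ c)
    (T : X → X)
    (hI : ∀ x : X, T x ≠ x → T (T x) ≠ x)
    (hII : ∃ lam : ℝ, 0 < lam ∧ lam < 1 ∧
      ∀ x y z : X, x ≠ y → x ≠ z → y ≠ z →
        G (T x) (T y) (T z) ≤ lam * G x y z) :
    (∃ x : X, T x = x) ∧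
      ∀ x y z : X, T x = x → T y = y → T z = z → x = y ∨ x = z ∨ y = z := by
  obtain ⟨lam, hl0, hl1, hc⟩ := hII
  constructor
  · -- existence
    by_contra hfix
    push_neg at hfix
    obtain ⟨x0⟩ := ‹Nonempty X›
    set u : ℕ → X := fun n => T^[n] x0 with hu
    have hsucc : ∀ n, u (n + 1) = T (u n) := fun n => Function.iterate_succ_apply' T n x0
    have h1 : ∀ n, u (n + 1) ≠ u n := fun n => by rw [hsucc]; exact hfix _
    have h2 : ∀ n, u (n + 2) ≠ u n := fun n => by
      have : u (n + 2) = T (T (u n)) := by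
        rw [show n + 2 = (n + 1) + 1 from rfl, hsucc, hsucc]
      rw [this]; exact hI _ (hfix _)
    set a : ℕ → ℝ := fun n => G (u n) (u (n + 1)) (u (n + 2)) with ha
    have ha_pos : ∀ n, 0 < a n := fun n => by
      have hpos := hG.pos_of_ne (u n) (u (n + 1)) (h1 n).symm
      have hle := hG.le_of_ne (u n) (u (n + 1)) (u (n + 2)) (h1 (n + 1)).symm
      exact lt_of_lt_of_le hpos hle
    have hba : ∀ n, G (u n) (u n) (u (n + 1)) ≤ a n := fun n =>
      hG.le_of_ne (u n) (u (n + 1)) (u (n + 2)) (h1 (n + 1)).symm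
    have hb : ∀ n, G (u n) (u (n + 1)) (u (n + 1)) ≤ a n := fun n => by
      have e1 : G (u n) (u (n + 1)) (u (n + 1)) = G (u (n + 1)) (u (n + 1)) (u n) := by
        rw [hG.swap_left (u n) (u (n + 1)) (u (n + 1)),
          hG.swap_right (u (n + 1)) (u n) (u (n + 1))]
      have e2 := hG.le_of_ne (u (n + 1)) (u n) (u (n + 2)) (h2 n).symm
      have e3 : G (u (n + 1)) (u n) (u (n + 2)) = a n := hG.swap_left (u (n+1)) (u n) (u (n+2)) ▸ rfl
      rw [e1]
      calc G (u (n + 1)) (u (n + 1)) (u n) ≤ G (u (n + 1)) (u n) (u (n + 2)) := e2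
        _ = a n := by rw [hG.swap_left (u (n+1)) (u n) (u (n+2))]
    have ha_step : ∀ n, a (n + 1) ≤ lam * a n := fun n => by
      have hd1 : u n ≠ u (n + 1) := (h1 n).symm
      have hd2 : u n ≠ u (n + 2) := (h2 n).symm
      have hd3 : u (n + 1) ≠ u (n + 2) := (h1 (n + 1)).symm
      have := hc (u n) (u (n + 1)) (u (n + 2)) hd1 hd2 hd3
      have e1 : u (n + 1) = T (u n) := hsucc n
      have e2 : u (n + 2) = T (u (n + 1)) := hsucc (n + 1)
      have e3 : u (n + 3) = T (u (n + 2)) := hsucc (n + 2)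
      rw [← e3, ← e2, ← e1] at this
      exact this
    have ha_pow : ∀ n p, a (n + p) ≤ lam ^ p * a n := by
      intro n p
      induction p with
      | zero => simp
      | succ p ih =>
        have h := ha_step (n + p)
        have : lam * a (n + p) ≤ lam * (lam ^ p * a n) :=
          mul_le_mul_of_nonneg_left ih hl0.le
        calc a (n + p + 1) ≤ lam * a (n + p) := h
          _ ≤ lam * (lam ^ p * a n) := this
          _ = lam ^ (p + 1) * a n := by ring
    have ha_geo : ∀ n, a n ≤ lam ^ n * a 0 := fun n => by simpa using ha_pow 0 n
    have hlam1 : (0:ℝ) < 1 - lam := by linarith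
    set C : ℝ := a 0 / (1 - lam) with hC
    have hCnn : 0 ≤ C := div_nonneg (ha_pos 0).le hlam1.le
    have hsum : ∀ n k, G (u n) (u (n + k)) (u (n + k)) ≤ C * lam ^ n - C * lam ^ (n + k) := by
      intro n k
      induction k with
      | zero =>
        have : G (u n) (u n) (u n) = 0 := (hG.eq_zero_iff _ _ _).mpr ⟨rfl, rfl⟩
        simp [this]
      | succ k ih =>
        have htri := hG.triangle (u n) (u (n + k + 1)) (u (n + k + 1)) (u (n + k))
        have hbm := hb (n + k)
        have hgeo := ha_geo (n + k)
        have heq : C * lam ^ (n + k) - C * lam ^ (n + k + 1) = lam ^ (n + k) * a 0 := by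
          rw [hC]; field_simp; ring
        have : G (u n) (u (n+k+1)) (u (n+k+1)) ≤
            (C * lam ^ n - C * lam ^ (n + k)) + lam ^ (n+k) * a 0 := by
          have h5 := hG.triangle (u n) (u (n+k+1)) (u (n+k+1)) (u (n+k))
          linarith
        have : G (u n) (u (n+k+1)) (u (n+k+1)) ≤ C * lam ^ n - C * lam ^ (n + k + 1) := by
          linarith
        simpa [show n + (k+1) = n + k + 1 from rfl] using this
    have hsum' : ∀ n m, n ≤ m → G (u n) (u m) (u m) ≤ C * lam ^ n := by
      intro n m h
      obtain ⟨k, rfl⟩ := Nat.exists_eq_add_of_le h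
      have h1' := hsum n k
      have h2' : 0 ≤ C * lam ^ (n + k) := mul_nonneg hCnn (pow_nonneg hl0.le _)
      linarith
    have hbound : ∀ p : ℕ × ℕ, G (u p.1) (u p.2) (u p.2) ≤ 2 * C * lam ^ (min p.1 p.2) := by
      rintro ⟨n, m⟩
      rcases le_total n m with h | h
      · have := hsum' n m h
        have hnn : 0 ≤ C * lam ^ n := mul_nonneg hCnn (pow_nonneg hl0.le _)
        simp only [min_eq_left h]
        linarith
      · have := hsum' m n h
        have := hG.symm_le (u n) (u m)
        simp only [min_eq_right h]
        nlinarith [hG.nonneg (u m) (u n) (u n)]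
    have hmin : Tendsto (fun p : ℕ × ℕ => min p.1 p.2) atTop atTop := by
      apply Filter.tendsto_atTop_atTop.mpr
      intro b
      exact ⟨(b, b), fun p hp => le_min hp.1 hp.2⟩
    have hpow : Tendsto (fun p : ℕ × ℕ => lam ^ (min p.1 p.2)) atTop (nhds 0) :=
      (tendsto_pow_atTop_nhds_zero_of_lt_one hl0.le hl1).comp hmin
    have hcauchy : GCauchy G u := by
      apply squeeze_zero (fun p => hG.nonneg _ _ _) hbound
      have := hpow.const_mul (2 * C)
      simpa using this
    obtain ⟨x, hx⟩ := hcomp u hcauchy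
    -- injectivity of u
    have huinj : ∀ n m, n < m → u n ≠ u m := by
      intro n m hlt heq
      set p := m - n with hp
      have hp1 : 1 ≤ p := by omega
      have hm : m = n + p := by omega
      have e0 : u (n + p) = u n := by rw [← hm, heq]
      have e1 : u (n + p + 1) = u (n + 1) := by rw [hsucc, hsucc, e0]
      have e2 : u (n + p + 2) = u (n + 2) := by
        rw [show n + p + 2 = (n + p + 1) + 1 from rfl, hsucc, e1, ← hsucc]
      have eaa : a (n + p) = a n := by
        show G (u (n+p)) (u (n+p+1)) (u (n+p+2)) = G (u n) (u (n+1)) (u (n+2))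
        rw [e0, e1, e2]
      have hle := ha_pow n p
      have hlp : lam ^ p ≤ lam := by
        calc lam ^ p ≤ lam ^ 1 := pow_le_pow_of_le_one hl0.le hl1.le hp1
          _ = lam := pow_one lam
      nlinarith [ha_pos n]
    have hinj : Function.Injective u := by
      intro n m h
      by_contra hne
      rcases lt_or_gt_of_ne hne with hlt | hlt
      · exact huinj n m hlt h
      · exact huinj m n hlt h.symm
    have hev : ∀ y : X, ∀ᶠ n in atTop, u n ≠ y := by
      intro y
      by_cases h : ∃ n, u n = y
      · obtain ⟨n0, hn0⟩ := h
        filter_upwards [eventually_gt_atTop n0] with n hn he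
        exact hn.ne' (hinj (he.trans hn0.symm))
      · push_neg at h
        exact Eventually.of_forall h
    obtain ⟨N1, hN1⟩ := eventually_atTop.1 (hev x)
    obtain ⟨N2, hN2⟩ := eventually_atTop.1 (hev (T x))
    have key : ∀ᶠ n in atTop, G (T x) x x ≤
        lam * (2 * G (u n) x x + a n) + G (u (n + 1)) x x := by
      filter_upwards [eventually_ge_atTop (N1 + N2)] with n hn
      have hnx : u n ≠ x := hN1 n (by omega)
      have hn1x : u (n + 1) ≠ x := hN1 (n + 1) (by omega)
      have hn2T : u (n + 2) ≠ T x := hN2 (n + 2) (by omega)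
      have hcontr := hc x (u n) (u (n + 1)) (Ne.symm hnx) (Ne.symm hn1x) (h1 n).symm
      rw [← hsucc n, ← hsucc (n + 1)] at hcontr
      -- G (T x) (u (n+1)) (u (n+2)) ≤ lam * G x (u n) (u (n+1))
      have hle1 : G (T x) (u (n + 1)) (u (n + 1)) ≤ G (T x) (u (n + 1)) (u (n + 2)) := by
        have e1 : G (T x) (u (n + 1)) (u (n + 1)) = G (u (n + 1)) (u (n + 1)) (T x) := by
          rw [hG.swap_left (T x) (u (n+1)) (u (n+1)),
            hG.swap_right (u (n+1)) (T x) (u (n+1))]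
        have e2 := hG.le_of_ne (u (n + 1)) (T x) (u (n + 2)) (Ne.symm hn2T)
        have e3 : G (u (n + 1)) (T x) (u (n + 2)) = G (T x) (u (n + 1)) (u (n + 2)) :=
          (hG.swap_left (u (n+1)) (T x) (u (n+2)))
        rw [e1, ← e3]; exact e2
      have htri1 := hG.triangle (T x) x x (u (n + 1))
      have htri2 := hG.triangle x (u n) (u (n + 1)) (u n)
      have hsym := hG.symm_le x (u n)
      have hban := hba n
      have hmul : lam * G x (u n) (u (n + 1)) ≤ lam * (2 * G (u n) x x + a n) := by
        apply mul_le_mul_of_nonneg_left _ hl0.le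
        linarith
      linarith
    have t1 : Tendsto (fun n => G (u n) x x) atTop (nhds 0) := hx
    have t2 : Tendsto (fun n => G (u (n + 1)) x x) atTop (nhds 0) :=
      t1.comp (tendsto_add_atTop_nat 1)
    have t3 : Tendsto a atTop (nhds 0) := by
      apply squeeze_zero (fun n => (ha_pos n).le) ha_geo
      have := (tendsto_pow_atTop_nhds_zero_of_lt_one hl0.le hl1).mul_const (a 0)
      simpa using this
    have htend : Tendsto (fun n => lam * (2 * G (u n) x x + a n) + G (u (n + 1)) x x)
        atTop (nhds 0) := by
      have := (((t1.const_mul 2).add t3).const_mul lam).add t2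
      simpa using this
    have hle0 : G (T x) x x ≤ 0 := ge_of_tendsto htend key
    have hzero : G (T x) x x = 0 := le_antisymm hle0 (hG.nonneg _ _ _)
    have := ((hG.eq_zero_iff _ _ _).mp hzero).1
    exact hfix x this
  · -- at most two fixed points
    intro x y z hx hy hz
    by_contra h
    push_neg at h
    obtain ⟨hxy, hxz, hyz⟩ := h
    have h1 := hc x y z hxy hxz hyz
    rw [hx, hy, hz] at h1
    have h2 : 0 < G x y z :=
      lt_of_lt_of_le (hG.pos_of_ne x y hxy) (hG.le_of_ne x y z hyz)
    nlinarith
end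

section
/- Let (X,G) be a complete G-metric space with at least 3 elements, and let T : X → X be a mapping such that (I) for all x ∈ X, if Tx ≠ x then T(Tx) ≠ x, and (II) there exists a constant λ ∈ (0,1/3) such that G(Tx,Ty,Tz) ≤ λ·[G(x,Tx,Tx) + G(y,Ty,Ty) + G(z,Tz,Tz)] for all pairwise distinct points x, y, z ∈ X. Then T has at least one fixed point, and T has at most two fixed points. -/
open Filter

/-- Kannan fixed point theorem in G-metric spaces (Theorem 3.4). -/
theorem kannan_fixedPoint_GMetric {X : Type*} [Nonempty X] (G : X → X → X → ℝ)
    (hG : IsGMetric G) (hcomp : GComplete G)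
    (hcard : ∃ a b c : X, a ≠ b ∧ a ≠ c ∧ b ≠ c)
    (T : X → X)
    (hI : ∀ x : X, T x ≠ x → T (T x) ≠ x)
    (hII : ∃ lam : ℝ, 0 < lam ∧ lam < 1 / 3 ∧
      ∀ x y z : X, x ≠ y → x ≠ z → y ≠ z →
        G (T x) (T y) (T z) ≤
          lam * (G x (T x) (T x) + G y (T y) (T y) + G z (T z) (T z))) :
    (∃ x : X, T x = x) ∧
      ∀ x y z : X, T x = x → T y = y → T z = z → x = y ∨ x = z ∨ y = z := by
  obtain ⟨lam, hlam0, hlam13, hII⟩ := hII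
  have rot : ∀ a b c, G a b c = G b c a := fun a b c =>
    (hG.swap_left a b c).trans (hG.swap_right b a c)
  have htwo : ∀ a b, G a b b ≤ 2 * G b a a := by
    intro a b
    have h1 : G a b b = G b b a := rot a b b
    have h2 := hG.triangle b b a a
    have h3 : G a b a = G b a a := rot a b a
    rw [h3] at h2
    linarith
  constructor
  · -- existence
    by_contra hfix
    push_neg at hfix
    obtain ⟨x₀⟩ := ‹Nonempty X›
    set x : ℕ → X := fun n => T^[n] x₀ with hxdef
    have hx : ∀ n, x (n + 1) = T (x n) := fun n => Function.iterate_succ_apply' T n x₀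
    set d : ℕ → ℝ := fun n => G (x n) (x (n + 1)) (x (n + 1)) with hddef
    have hd : ∀ n, d n = G (x n) (x (n + 1)) (x (n + 1)) := fun n => rfl
    have hdnn : ∀ n, 0 ≤ d n := fun n => hG.nonneg _ _ _
    have hne1 : ∀ n, x (n + 1) ≠ x n := by intro n; rw [hx n]; exact hfix (x n)
    have hne2 : ∀ n, x (n + 2) ≠ x n := by
      intro n
      rw [hx (n + 1), hx n]
      exact hI (x n) (hfix (x n))
    have hdpos : ∀ n, 0 < d n := by
      intro n
      have h := hG.pos_of_ne (x (n + 1)) (x n) (hne1 n)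
      have e : G (x (n + 1)) (x (n + 1)) (x n) = d n := (rot _ _ _).trans (rot _ _ _)
      linarith [e ▸ h]
    set r : ℝ := lam / (1 - lam) with hrdef
    have h1lam : 0 < 1 - lam := by linarith
    have hr0 : 0 < r := div_pos hlam0 h1lam
    have hr2 : 2 * r < 1 := by
      rw [hrdef, show 2 * (lam / (1 - lam)) = (2 * lam) / (1 - lam) by ring,
        div_lt_one h1lam]
      linarith
    have hrec : ∀ n, d (n + 2) ≤ r * (d (n + 1) + d n) := by
      intro n
      have hab : x n ≠ x (n + 1) := (hne1 n).symm
      have hac : x n ≠ x (n + 2) := (hne2 n).symm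
      have hbc : x (n + 1) ≠ x (n + 2) := (hne1 (n + 1)).symm
      have key := hII (x n) (x (n + 1)) (x (n + 2)) hab hac hbc
      rw [← hx n, ← hx (n + 1), ← hx (n + 2)] at key
      have hle : d (n + 2) ≤ G (x (n + 1)) (x (n + 2)) (x (n + 3)) := by
        have e1 : d (n + 2) = G (x (n + 3)) (x (n + 3)) (x (n + 2)) := by
          rw [hd, show n + 2 + 1 = n + 3 by omega]
          exact rot _ _ _
        have e2 := hG.le_of_ne (x (n + 3)) (x (n + 2)) (x (n + 1)) (hne1 (n + 1))
        have e3 : G (x (n + 3)) (x (n + 2)) (x (n + 1)) = G (x (n + 1)) (x (n + 2)) (x (n + 3)) := by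
          rw [hG.swap_left, hG.swap_right, hG.swap_left]
        rw [e1]
        exact e2.trans (le_of_eq e3)
      have halg : d (n + 2) ≤ lam * (d n + d (n + 1) + d (n + 2)) := by
        rw [hd n, hd (n + 1), hd (n + 2)]
        exact hle.trans key
      rw [hrdef, div_mul_eq_mul_div, le_div_iff₀ h1lam]
      nlinarith [halg]
    set s : ℝ := Real.sqrt (2 * r) with hsdef
    have hs0 : 0 < s := Real.sqrt_pos.mpr (by linarith)
    have hs2 : s ^ 2 = 2 * r := Real.sq_sqrt (by linarith)
    have hs1 : s < 1 := by nlinarith [Real.sqrt_nonneg (2 * r)]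
    set C : ℝ := max (d 0) (d 1 / s) with hCdef
    have hC0 : 0 ≤ C := le_trans (hdnn 0) (le_max_left _ _)
    have hgeo : ∀ n, d n ≤ C * s ^ n ∧ d (n + 1) ≤ C * s ^ (n + 1) := by
      intro n
      induction n with
      | zero =>
        constructor
        · have h0 : d 0 ≤ C := le_max_left _ _
          simpa using h0
        · have h1 : d 1 / s ≤ C := le_max_right _ _
          have h2 := (div_le_iff₀ hs0).mp h1
          simpa [mul_comm] using h2
      | succ n ih =>
        refine ⟨ih.2, ?_⟩
        have h1 := hrec n
        have h2 : r * (d (n + 1) + d n) ≤ r * (C * s ^ (n + 1) + C * s ^ n) := by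
          apply mul_le_mul_of_nonneg_left (by linarith [ih.1, ih.2]) hr0.le
        have h3 : r * (C * s ^ (n + 1) + C * s ^ n) ≤ C * s ^ (n + 2) := by
          have e : s ^ (n + 2) = s ^ n * s ^ 2 := by ring
          have e1 : s ^ (n + 1) = s ^ n * s := by ring
          rw [e, hs2, e1]
          have hsn : (0 : ℝ) ≤ s ^ n := pow_nonneg hs0.le n
          have hfact : 0 ≤ (1 - s) * r * C * s ^ n :=
            mul_nonneg (mul_nonneg (mul_nonneg (by linarith) hr0.le) hC0) hsn
          nlinarith [hfact]
        linarith
    have hsum : Summable d := by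
      apply Summable.of_nonneg_of_le hdnn (fun n => (hgeo n).1)
      exact (summable_geometric_of_lt_one hs0.le hs1).mul_left C
    have hd0 : Tendsto d atTop (nhds 0) := hsum.tendsto_atTop_zero
    have hchain : ∀ n k, G (x n) (x (n + k)) (x (n + k)) ≤ ∑ j ∈ Finset.range k, d (n + j) := by
      intro n k
      induction k with
      | zero =>
        simp [(hG.eq_zero_iff (x n) (x n) (x n)).mpr ⟨rfl, rfl⟩]
      | succ k ih =>
        have h1 := hG.triangle (x n) (x (n + (k + 1))) (x (n + (k + 1))) (x (n + k))
        have e : n + (k + 1) = (n + k) + 1 := by ring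
        rw [Finset.sum_range_succ, e]
        calc G (x n) (x (n + k + 1)) (x (n + k + 1))
            ≤ G (x n) (x (n + k)) (x (n + k)) + G (x (n + k)) (x (n + k + 1)) (x (n + k + 1)) := by
              have := hG.triangle (x n) (x (n + k + 1)) (x (n + k + 1)) (x (n + k)); linarith
          _ ≤ (∑ j ∈ Finset.range k, d (n + j)) + d (n + k) := by
              rw [hd (n + k)]; exact add_le_add ih le_rfl
    set S : ℕ → ℝ := fun N => ∑' k, d (N + k) with hSdef
    have hSsum : ∀ N, Summable (fun k => d (N + k)) := by
      intro N
      have := (summable_nat_add_iff N).mpr hsum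
      exact this.congr (fun k => by rw [add_comm])
    have hS0 : ∀ N, 0 ≤ S N := fun N => tsum_nonneg (fun k => hdnn _)
    have hStend : Tendsto S atTop (nhds 0) := by
      have h := tendsto_sum_nat_add d
      refine h.congr (fun i => ?_)
      exact tsum_congr (fun k => by rw [add_comm])
    have hboundS : ∀ n m, n ≤ m → G (x n) (x m) (x m) ≤ S n := by
      intro n m hnm
      obtain ⟨k, rfl⟩ := Nat.exists_eq_add_of_le hnm
      refine (hchain n k).trans ?_
      exact Summable.sum_le_tsum (Finset.range k) (fun j _ => hdnn _) (hSsum n)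
    have hball : ∀ p : ℕ × ℕ, G (x p.1) (x p.2) (x p.2) ≤ 2 * S (min p.1 p.2) := by
      rintro ⟨n, m⟩
      rcases le_total n m with h | h
      · simp only [min_eq_left h]
        linarith [hboundS n m h, hS0 n]
      · simp only [min_eq_right h]
        have h1 := htwo (x n) (x m)
        have h2 : G (x m) (x n) (x n) = G (x m) (x n) (x n) := rfl
        have h3 : G (x m) (x n) (x n) ≤ S m := hboundS m n h
        linarith
    have hmin : Tendsto (fun p : ℕ × ℕ => min p.1 p.2) atTop atTop := by
      rw [← prod_atTop_atTop_eq]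
      rw [tendsto_atTop]
      intro b
      have h1 : ∀ᶠ p : ℕ × ℕ in atTop ×ˢ atTop, b ≤ p.1 :=
        (eventually_ge_atTop b).prod_inl atTop
      have h2 : ∀ᶠ p : ℕ × ℕ in atTop ×ˢ atTop, b ≤ p.2 :=
        (eventually_ge_atTop b).prod_inr atTop
      filter_upwards [h1, h2] with p hp1 hp2
      exact le_min hp1 hp2
    have hcauchy : GCauchy G x := by
      unfold GCauchy
      have hg : Tendsto (fun p : ℕ × ℕ => 2 * S (min p.1 p.2)) atTop (nhds 0) := by
        have := (hStend.comp hmin).const_mul (2 : ℝ)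
        simpa using this
      exact squeeze_zero (fun p => hG.nonneg _ _ _) hball hg
    obtain ⟨u, hu⟩ := hcomp x hcauchy
    have huT : T u ≠ u := hfix u
    have hc : 0 < G u (T u) (T u) := by
      have h := hG.pos_of_ne (T u) u huT
      have e : G (T u) (T u) u = G u (T u) (T u) := (rot _ _ _).trans (rot _ _ _)
      linarith [e ▸ h]
    set c : ℝ := G u (T u) (T u) with hcdef
    have hxu : Tendsto (fun n => G u (x n) (x n)) atTop (nhds 0) := by
      have hg : Tendsto (fun n => 2 * G (x n) u u) atTop (nhds 0) := by
        have := hu.const_mul (2 : ℝ); simpa using this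
      exact squeeze_zero (fun n => hG.nonneg _ _ _) (fun n => htwo u (x n)) hg
    have hNex : ∃ N, ∀ n, N ≤ n → x n ≠ u := by
      by_cases h : ∃ a, x a = u
      · obtain ⟨a, ha⟩ := h
        refine ⟨a + 1, fun n hn hxn => ?_⟩
        -- periodicity contradiction
        set p : ℕ := n - a with hpdef
        have hap : n = a + p := by omega
        have hp1 : 1 ≤ p := by omega
        have hper : ∀ m, a ≤ m → x (m + p) = x m := by
          intro m hm
          obtain ⟨j, rfl⟩ := Nat.exists_eq_add_of_le hm
          have : ∀ j, x (n + j) = x (a + j) := by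
            intro j
            induction j with
            | zero => simpa using hxn.trans ha.symm
            | succ j ih =>
              have e1 : n + (j + 1) = (n + j) + 1 := by ring
              have e2 : a + (j + 1) = (a + j) + 1 := by ring
              rw [e1, e2, hx, hx, ih]
          have e : a + j + p = n + j := by omega
          rw [e, this j]
        have hpk : ∀ k m, a ≤ m → x (m + k * p) = x m := by
          intro k
          induction k with
          | zero => intro m _; simp
          | succ k ih =>
            intro m hm
            have e : m + (k + 1) * p = (m + k * p) + p := by ring
            rw [e, hper (m + k * p) (by omega), ih m hm]
        have hdper : ∀ k, d (a + k * p) = d a := by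
          intro k
          rw [hd, hd]
          have e1 : x (a + k * p) = x a := hpk k a le_rfl
          have e2 : x (a + k * p + 1) = x (a + 1) := by
            have e : a + k * p + 1 = (a + 1) + k * p := by ring
            rw [e, hpk k (a + 1) (by omega)]
          rw [e1, e2]
        have hsub : Tendsto (fun k => a + k * p) atTop atTop := by
          apply tendsto_atTop_atTop.mpr
          intro b
          exact ⟨b, fun k hk => by nlinarith⟩
        have hlim : Tendsto (fun k => d (a + k * p)) atTop (nhds 0) := hd0.comp hsub
        have hconst : Tendsto (fun k : ℕ => d (a + k * p)) atTop (nhds (d a)) := by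
          simp only [hdper]; exact tendsto_const_nhds
        have : d a = 0 := tendsto_nhds_unique hconst hlim
        exact absurd this (ne_of_gt (hdpos a))
      · push_neg at h
        exact ⟨0, fun n _ => h n⟩
    obtain ⟨N, hNe⟩ := hNex
    have hfin : ∀ n, N ≤ n →
        c ≤ G u (x (n + 2)) (x (n + 2)) + lam * (d n + d (n + 1) + c) := by
      intro n hn
      have h1 : x n ≠ x (n + 1) := (hne1 n).symm
      have h2 : x n ≠ u := hNe n hn
      have h3 : x (n + 1) ≠ u := hNe (n + 1) (by omega)
      have key := hII (x n) (x (n + 1)) u h1 h2 h3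
      rw [← hx n, ← hx (n + 1)] at key
      have h4 : G (x (n + 2)) (T u) (T u) ≤ G (x (n + 1)) (x (n + 2)) (T u) := by
        have e1 : G (x (n + 2)) (T u) (T u) = G (T u) (T u) (x (n + 2)) :=
          rot _ _ _
        have e2 := hG.le_of_ne (T u) (x (n + 2)) (x (n + 1)) (hne1 (n + 1))
        have e3 : G (T u) (x (n + 2)) (x (n + 1)) = G (x (n + 1)) (x (n + 2)) (T u) := by
          rw [hG.swap_left, hG.swap_right, hG.swap_left]
        rw [e1]
        exact e2.trans (le_of_eq e3)
      have h5 := hG.triangle u (T u) (T u) (x (n + 2))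
      rw [hd n, hd (n + 1), hcdef]
      have key' : G (x (n + 1)) (x (n + 2)) (T u) ≤
          lam * (G (x n) (x (n + 1)) (x (n + 1)) + G (x (n + 1)) (x (n + 2)) (x (n + 2))
            + G u (T u) (T u)) := key
      linarith
    have hlim2 : Tendsto (fun n => G u (x (n + 2)) (x (n + 2)) + lam * (d n + d (n + 1) + c))
        atTop (nhds (0 + lam * (0 + 0 + c))) := by
      apply Tendsto.add
      · exact hxu.comp (tendsto_add_atTop_nat 2)
      · exact Tendsto.const_mul lam
          (((hd0.add (hd0.comp (tendsto_add_atTop_nat 1))).add tendsto_const_nhds))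
    have hcle : c ≤ 0 + lam * (0 + 0 + c) :=
      ge_of_tendsto hlim2 (eventually_atTop.2 ⟨N, hfin⟩)
    nlinarith [hc, hcle]
  · -- at most two fixed points
    intro a b c hta htb htc
    by_contra h
    push_neg at h
    obtain ⟨hab, hac, hbc⟩ := h
    have key := hII a b c hab hac hbc
    rw [hta, htb, htc] at key
    have e : ∀ w : X, G w w w = 0 := fun w => (hG.eq_zero_iff w w w).mpr ⟨rfl, rfl⟩
    rw [e a, e b, e c] at key
    have h0 : G a b c = 0 := le_antisymm (by linarith) (hG.nonneg a b c)
    obtain ⟨h1, _⟩ := (hG.eq_zero_iff a b c).mp h0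
    exact hab h1
end

section
/- Let (X,G) be a complete G-metric space with at least 3 elements, and let T : X → X be a mapping such that (I) for all x ∈ X, if Tx ≠ x then T(Tx) ≠ x, and (II) there exist nonnegative constants a₁, a₂, a₃, a₄ with 0 < a₁ + a₂ + a₃ + a₄ < 1 such that G(Tx,Ty,Tz) ≤ a₁·G(x,Tx,Tx) + a₂·G(y,Ty,Ty) + a₃·G(z,Tz,Tz) + a₄·G(x,y,z) for all pairwise distinct points x, y, z ∈ X. Then T has at least one fixed point, and T has at most two fixed points. -/
open Filter

/-- Reich fixed point theorem in G-metric spaces (Theorem 3.7). -/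
theorem reich_fixedPoint_GMetric {X : Type*} [Nonempty X] (G : X → X → X → ℝ)
    (hG : IsGMetric G) (hcomp : GComplete G)
    (hcard : ∃ a b c : X, a ≠ b ∧ a ≠ c ∧ b ≠ c)
    (T : X → X)
    (hI : ∀ x : X, T x ≠ x → T (T x) ≠ x)
    (hII : ∃ a₁ a₂ a₃ a₄ : ℝ, 0 ≤ a₁ ∧ 0 ≤ a₂ ∧ 0 ≤ a₃ ∧ 0 ≤ a₄ ∧
      0 < a₁ + a₂ + a₃ + a₄ ∧ a₁ + a₂ + a₃ + a₄ < 1 ∧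
      ∀ x y z : X, x ≠ y → x ≠ z → y ≠ z →
        G (T x) (T y) (T z) ≤
          a₁ * G x (T x) (T x) + a₂ * G y (T y) (T y) + a₃ * G z (T z) (T z) +
            a₄ * G x y z) :
    (∃ x : X, T x = x) ∧
      ∀ x y z : X, T x = x → T y = y → T z = z → x = y ∨ x = z ∨ y = z := by
  obtain ⟨a₁, a₂, a₃, a₄, ha₁, ha₂, ha₃, ha₄, hposs, hsum, hc⟩ := hII
  -- symmetry helpers
  have hcyc : ∀ a b c : X, G a b c = G b c a := fun a b c => by
    rw [hG.swap_left, hG.swap_right]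
  have hrev : ∀ a b c : X, G a b c = G c b a := fun a b c => by
    rw [hG.swap_right, hcyc]
  have hyy : ∀ a b : X, G a b b = G b b a := fun a b => hrev a b b
  have hxx : ∀ a b : X, G a a b = G b a a := fun a b => (hcyc a a b).trans (hcyc a b a)
  have hdouble : ∀ a b : X, G a b b ≤ 2 * G b a a := by
    intro a b
    have h1 : G a b b = G b b a := hyy a b
    have h2 : G b b a ≤ G b a a + G a b a := hG.triangle b b a a
    have h3 : G a b a = G a a b := hG.swap_right a b a
    have h4 : G a a b = G b a a := hxx a b
    linarith
  have hden : (0:ℝ) < 1 - a₃ := by linarith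
  constructor
  · -- existence
    obtain ⟨x₀⟩ := ‹Nonempty X›
    by_cases hfix : ∃ n : ℕ, T (T^[n] x₀) = T^[n] x₀
    · obtain ⟨n, hn⟩ := hfix
      exact ⟨T^[n] x₀, hn⟩
    push_neg at hfix
    suffices h : ∀ x : ℕ → X, (∀ n, x (n+1) = T (x n)) → (∀ n, T (x n) ≠ x n) →
        ∃ p, T p = p by
      exact h (fun n => T^[n] x₀) (fun n => Function.iterate_succ_apply' T n x₀) hfix
    intro x hstep hTx
    have hne1 : ∀ n : ℕ, x n ≠ x (n+1) := by
      intro n h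
      exact hTx n ((hstep n).symm.trans h.symm)
    have hne2 : ∀ n : ℕ, x n ≠ x (n+2) := by
      intro n h
      have h2 : x (n+2) = T (T (x n)) := by
        rw [show x (n+2) = T (x (n+1)) from hstep (n+1), hstep n]
      exact hI (x n) (hTx n) (h2.symm.trans h.symm)
    set k : ℝ := (a₁ + a₂ + a₄) / (1 - a₃) with hk
    have hk0 : 0 ≤ k := div_nonneg (by linarith) (by linarith)
    have hk1 : k < 1 := (div_lt_one hden).2 (by linarith)
    have hdpos : ∀ n, 0 < G (x n) (x (n+1)) (x (n+2)) := by
      intro n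
      have h1 : 0 < G (x n) (x n) (x (n+1)) := hG.pos_of_ne _ _ (hne1 n)
      have h2 : G (x n) (x n) (x (n+1)) ≤ G (x n) (x (n+1)) (x (n+2)) :=
        hG.le_of_ne _ _ _ (show x (n+1) ≠ x (n+2) from hne1 (n+1))
      linarith
    have hEd : ∀ n, G (x n) (x (n+1)) (x (n+1)) ≤ G (x n) (x (n+1)) (x (n+2)) := by
      intro n
      have h1 : G (x n) (x (n+1)) (x (n+1)) = G (x (n+1)) (x (n+1)) (x n) := hyy _ _
      have h2 : G (x (n+1)) (x (n+1)) (x n) ≤ G (x (n+1)) (x n) (x (n+2)) :=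
        hG.le_of_ne _ _ _ (hne2 n)
      have h3 : G (x (n+1)) (x n) (x (n+2)) = G (x n) (x (n+1)) (x (n+2)) := hG.swap_left _ _ _
      linarith
    have hEd' : ∀ n, G (x (n+1)) (x (n+2)) (x (n+2)) ≤ G (x n) (x (n+1)) (x (n+2)) := by
      intro n
      have h1 : G (x (n+1)) (x (n+2)) (x (n+2)) = G (x (n+2)) (x (n+2)) (x (n+1)) := hyy _ _
      have h2 : G (x (n+2)) (x (n+2)) (x (n+1)) ≤ G (x (n+2)) (x (n+1)) (x n) :=
        hG.le_of_ne _ _ _ (Ne.symm (hne1 n))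
      have h3 : G (x (n+2)) (x (n+1)) (x n) = G (x n) (x (n+1)) (x (n+2)) := hrev _ _ _
      linarith
    have hrec : ∀ n, G (x (n+1)) (x (n+2)) (x (n+3)) ≤ k * G (x n) (x (n+1)) (x (n+2)) := by
      intro n
      have h5 := hc (x n) (x (n+1)) (x (n+2)) (hne1 n) (hne2 n)
        (show x (n+1) ≠ x (n+2) from hne1 (n+1))
      rw [show T (x n) = x (n+1) from (hstep n).symm,
          show T (x (n+1)) = x (n+2) from (hstep (n+1)).symm,
          show T (x (n+2)) = x (n+3) from (hstep (n+2)).symm] at h5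
      have m1 : a₁ * G (x n) (x (n+1)) (x (n+1)) ≤ a₁ * G (x n) (x (n+1)) (x (n+2)) :=
        mul_le_mul_of_nonneg_left (hEd n) ha₁
      have m2 : a₂ * G (x (n+1)) (x (n+2)) (x (n+2)) ≤ a₂ * G (x n) (x (n+1)) (x (n+2)) :=
        mul_le_mul_of_nonneg_left (hEd' n) ha₂
      have m3 : a₃ * G (x (n+2)) (x (n+3)) (x (n+3)) ≤ a₃ * G (x (n+1)) (x (n+2)) (x (n+3)) :=
        mul_le_mul_of_nonneg_left
          (hEd' (n+1) : G (x (n+2)) (x (n+3)) (x (n+3)) ≤ G (x (n+1)) (x (n+2)) (x (n+3))) ha₃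
      rw [hk, div_mul_eq_mul_div, le_div_iff₀ hden]
      nlinarith [h5, m1, m2, m3]
    have hgen : ∀ a b : ℕ, G (x (a+b)) (x (a+b+1)) (x (a+b+2)) ≤
        k^b * G (x a) (x (a+1)) (x (a+2)) := by
      intro a b
      induction b with
      | zero => simp
      | succ b ih =>
        have h1 : G (x (a+b+1)) (x (a+b+2)) (x (a+b+3)) ≤
            k * G (x (a+b)) (x (a+b+1)) (x (a+b+2)) := hrec (a+b)
        calc G (x (a+(b+1))) (x (a+(b+1)+1)) (x (a+(b+1)+2))
            ≤ k * G (x (a+b)) (x (a+b+1)) (x (a+b+2)) := h1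
          _ ≤ k * (k^b * G (x a) (x (a+1)) (x (a+2))) := mul_le_mul_of_nonneg_left ih hk0
          _ = k^(b+1) * G (x a) (x (a+1)) (x (a+2)) := by ring
    have hd_le : ∀ n, G (x n) (x (n+1)) (x (n+2)) ≤ k^n * G (x 0) (x 1) (x 2) := by
      intro n
      simpa using hgen 0 n
    -- injectivity of the orbit
    have hinj : ∀ n m : ℕ, n < m → x n ≠ x m := by
      intro n m hlt heq
      obtain ⟨j, rfl⟩ := Nat.exists_eq_add_of_lt hlt
      have h1 : x (n+j+2) = x (n+1) := by
        rw [show x (n+j+2) = T (x (n+j+1)) from hstep (n+j+1), ← heq, ← hstep]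
      have h2 : x (n+j+3) = x (n+2) := by
        rw [show x (n+j+3) = T (x (n+j+2)) from hstep (n+j+2), h1]
        exact (hstep (n+1)).symm
      have hg : G (x (n+j+1)) (x (n+j+2)) (x (n+j+3)) ≤
          k^(j+1) * G (x n) (x (n+1)) (x (n+2)) := hgen n (j+1)
      rw [← heq, h1, h2] at hg
      have h4 : k^(j+1) < 1 := pow_lt_one₀ hk0 hk1 (Nat.succ_ne_zero j)
      nlinarith [hdpos n, hg, h4]
    -- Cauchy
    have hgeom : ∀ j : ℕ, (1-k) * ∑ i ∈ Finset.range j, k^i = 1 - k^j := by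
      intro j
      induction j with
      | zero => simp
      | succ j ih => rw [Finset.sum_range_succ, mul_add, ih]; ring
    set D : ℝ := G (x 0) (x 1) (x 2) with hD
    have hD0 : 0 < D := hdpos 0
    set C : ℝ := D / (1 - k) with hC
    have hC0 : 0 ≤ C := div_nonneg hD0.le (by linarith)
    have hclaim : ∀ n j : ℕ, G (x n) (x (n+j)) (x (n+j)) ≤ k^n * C := by
      intro n j
      have hsum1 : G (x n) (x (n+j)) (x (n+j)) ≤
          ∑ i ∈ Finset.range j, G (x (n+i)) (x (n+i+1)) (x (n+i+1)) := by
        induction j with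
        | zero =>
          simp only [Nat.add_zero, Finset.sum_range_zero]
          exact le_of_eq ((hG.eq_zero_iff _ _ _).2 ⟨rfl, rfl⟩)
        | succ j ih =>
          have t := hG.triangle (x n) (x (n+j+1)) (x (n+j+1)) (x (n+j))
          simp only [Finset.sum_range_succ]
          calc G (x n) (x (n+(j+1))) (x (n+(j+1)))
              ≤ G (x n) (x (n+j)) (x (n+j)) + G (x (n+j)) (x (n+j+1)) (x (n+j+1)) := t
            _ ≤ (∑ i ∈ Finset.range j, G (x (n+i)) (x (n+i+1)) (x (n+i+1))) +
                G (x (n+j)) (x (n+j+1)) (x (n+j+1)) := by linarith [ih]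
      have hsum2 : ∑ i ∈ Finset.range j, G (x (n+i)) (x (n+i+1)) (x (n+i+1)) ≤
          ∑ i ∈ Finset.range j, k^(n+i) * D :=
        Finset.sum_le_sum fun i _ => le_trans (hEd (n+i)) (hd_le (n+i))
      have hsum3 : ∑ i ∈ Finset.range j, k^(n+i) * D = k^n * D * ∑ i ∈ Finset.range j, k^i := by
        rw [Finset.mul_sum]
        exact Finset.sum_congr rfl fun i _ => by rw [pow_add]; ring
      have hsum4 : ∑ i ∈ Finset.range j, k^i ≤ 1/(1-k) := by
        rw [le_div_iff₀ (by linarith : (0:ℝ) < 1-k)]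
        nlinarith [hgeom j, pow_nonneg hk0 j]
      calc G (x n) (x (n+j)) (x (n+j))
          ≤ ∑ i ∈ Finset.range j, G (x (n+i)) (x (n+i+1)) (x (n+i+1)) := hsum1
        _ ≤ ∑ i ∈ Finset.range j, k^(n+i) * D := hsum2
        _ = k^n * D * ∑ i ∈ Finset.range j, k^i := hsum3
        _ ≤ k^n * D * (1/(1-k)) := by
            exact mul_le_mul_of_nonneg_left hsum4 (mul_nonneg (pow_nonneg hk0 n) hD0.le)
        _ = k^n * C := by rw [hC]; ring
    have hub : ∀ p : ℕ × ℕ, G (x p.1) (x p.2) (x p.2) ≤ 2*C*k^p.1 + 2*C*k^p.2 := by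
      rintro ⟨n, m⟩
      simp only
      rcases le_total n m with h | h
      · obtain ⟨j, rfl⟩ := Nat.exists_eq_add_of_le h
        have h1 := hclaim n j
        nlinarith [mul_nonneg hC0 (pow_nonneg hk0 n), mul_nonneg hC0 (pow_nonneg hk0 (n+j))]
      · obtain ⟨j, rfl⟩ := Nat.exists_eq_add_of_le h
        have h1 := hclaim m j
        have h2 : G (x (m+j)) (x m) (x m) ≤ 2 * G (x m) (x (m+j)) (x (m+j)) := hdouble _ _
        nlinarith [mul_nonneg hC0 (pow_nonneg hk0 m), mul_nonneg hC0 (pow_nonneg hk0 (m+j))]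
    have hCau : GCauchy G x := by
      have hfst : Tendsto (fun p : ℕ × ℕ => p.1) atTop atTop := by
        rw [← prod_atTop_atTop_eq]; exact tendsto_fst
      have hsnd : Tendsto (fun p : ℕ × ℕ => p.2) atTop atTop := by
        rw [← prod_atTop_atTop_eq]; exact tendsto_snd
      have hp : Tendsto (fun n : ℕ => k^n) atTop (nhds 0) :=
        tendsto_pow_atTop_nhds_zero_of_lt_one hk0 hk1
      have hlim : Tendsto (fun p : ℕ × ℕ => 2*C*k^p.1 + 2*C*k^p.2) atTop (nhds 0) := by
        have := ((hp.comp hfst).const_mul (2*C)).add ((hp.comp hsnd).const_mul (2*C))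
        simpa using this
      exact squeeze_zero (fun p => hG.nonneg _ _ _) hub hlim
    obtain ⟨u, hu⟩ := hcomp x hCau
    have hu' : Tendsto (fun n : ℕ => G (x n) u u) atTop (nhds 0) := hu
    have hev : ∀ᶠ n in atTop, x n ≠ u ∧ x (n+1) ≠ u := by
      by_cases hex : ∃ a, x a = u
      · obtain ⟨a, ha⟩ := hex
        filter_upwards [eventually_gt_atTop a] with n hn
        refine ⟨fun h => ?_, fun h => ?_⟩
        · exact hinj a n hn (ha.trans h.symm)
        · exact hinj a (n+1) (by omega) (ha.trans h.symm)
      · push_neg at hex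
        exact Eventually.of_forall fun n => ⟨hex n, hex (n+1)⟩
    have hkey : ∀ᶠ n in atTop, (1-a₃) * G u (T u) (T u) ≤
        2 * G (x (n+1)) u u + 2*a₄ * G (x n) u u +
          (a₁+a₂+a₄) * G (x n) (x (n+1)) (x (n+2)) := by
      filter_upwards [hev] with n hn
      obtain ⟨hnu, hn1u⟩ := hn
      have h5 := hc (x n) (x (n+1)) u (hne1 n) hnu hn1u
      rw [show T (x n) = x (n+1) from (hstep n).symm,
          show T (x (n+1)) = x (n+2) from (hstep (n+1)).symm] at h5
      have t1 : G u (T u) (T u) ≤ G u (x (n+1)) (x (n+1)) + G (x (n+1)) (T u) (T u) :=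
        hG.triangle u (T u) (T u) (x (n+1))
      have t2a : G (x (n+1)) (T u) (T u) = G (T u) (T u) (x (n+1)) := hyy _ _
      have t2b : G (T u) (T u) (x (n+1)) ≤ G (T u) (x (n+1)) (x (n+2)) :=
        hG.le_of_ne _ _ _ (show x (n+1) ≠ x (n+2) from hne1 (n+1))
      have t2c : G (T u) (x (n+1)) (x (n+2)) = G (x (n+1)) (x (n+2)) (T u) := hcyc _ _ _
      have t3 : G u (x (n+1)) (x (n+1)) ≤ 2 * G (x (n+1)) u u := hdouble u (x (n+1))
      have t4a : G (x n) (x (n+1)) u = G u (x n) (x (n+1)) :=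
        (hcyc _ _ _).trans (hcyc _ _ _)
      have t4b : G u (x n) (x (n+1)) ≤ G u (x n) (x n) + G (x n) (x n) (x (n+1)) :=
        hG.triangle u (x n) (x (n+1)) (x n)
      have t4c : G u (x n) (x n) ≤ 2 * G (x n) u u := hdouble u (x n)
      have t4d : G (x n) (x n) (x (n+1)) ≤ G (x n) (x (n+1)) (x (n+2)) :=
        hG.le_of_ne _ _ _ (show x (n+1) ≠ x (n+2) from hne1 (n+1))
      have m1 := mul_le_mul_of_nonneg_left (hEd n) ha₁
      have m2 := mul_le_mul_of_nonneg_left (hEd' n) ha₂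
      have m4 : a₄ * G (x n) (x (n+1)) u ≤
          a₄ * (2 * G (x n) u u + G (x n) (x (n+1)) (x (n+2))) := by
        apply mul_le_mul_of_nonneg_left _ ha₄
        rw [t4a]; linarith
      nlinarith [h5, t1, t2a, t2b, t2c, t3, m1, m2, m4]
    have hdlim : Tendsto (fun n => G (x n) (x (n+1)) (x (n+2))) atTop (nhds 0) := by
      apply squeeze_zero (fun n => (hdpos n).le) hd_le
      simpa using (tendsto_pow_atTop_nhds_zero_of_lt_one hk0 hk1).mul_const D
    have hRlim : Tendsto (fun n => 2 * G (x (n+1)) u u + 2*a₄ * G (x n) u u +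
        (a₁+a₂+a₄) * G (x n) (x (n+1)) (x (n+2))) atTop (nhds 0) := by
      have h1 : Tendsto (fun n : ℕ => G (x (n+1)) u u) atTop (nhds 0) :=
        hu'.comp (tendsto_add_atTop_nat 1)
      have := ((h1.const_mul 2).add (hu'.const_mul (2*a₄))).add
        (hdlim.const_mul (a₁+a₂+a₄))
      simpa using this
    have hfin : (1-a₃) * G u (T u) (T u) ≤ 0 := ge_of_tendsto hRlim hkey
    have h0 : G u (T u) (T u) ≤ 0 := by nlinarith [hG.nonneg u (T u) (T u)]
    have h0' : G u (T u) (T u) = 0 := le_antisymm h0 (hG.nonneg u (T u) (T u))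
    obtain ⟨h1, -⟩ := (hG.eq_zero_iff u (T u) (T u)).1 h0'
    exact ⟨u, h1.symm⟩
  · -- at most two fixed points
    intro p q r hp hq hr
    by_contra hcon
    push_neg at hcon
    obtain ⟨hpq, hpr, hqr⟩ := hcon
    have h5 := hc p q r hpq hpr hqr
    rw [hp, hq, hr] at h5
    have z1 : G p p p = 0 := (hG.eq_zero_iff p p p).2 ⟨rfl, rfl⟩
    have z2 : G q q q = 0 := (hG.eq_zero_iff q q q).2 ⟨rfl, rfl⟩
    have z3 : G r r r = 0 := (hG.eq_zero_iff r r r).2 ⟨rfl, rfl⟩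
    rw [z1, z2, z3] at h5
    have hgt : 0 < G p q r := lt_of_lt_of_le (hG.pos_of_ne p q hpq) (hG.le_of_ne p q r hqr)
    nlinarith [h5, hgt, mul_pos (show (0:ℝ) < 1 - a₄ by linarith) hgt]
end

section
/- Let (X,d) be a complete metric space with at least 3 elements and let T : X → X be a mapping such that (I) for all x ∈ X, if Tx ≠ x then T(Tx) ≠ x, and (II) there exists a constant λ ∈ (0,1) such that d(Tx,Ty) + d(Ty,Tz) + d(Tz,Tx) ≤ λ·[d(x,y) + d(y,z) + d(z,x)] for all pairwise distinct points x, y, z ∈ X. Then T has at least one fixed point, and T has at most two fixed points. -/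
open Filter Topology

/-- Corollary 4.2 (Petrov): mappings contracting perimeters of triangles on a complete
metric space with at least 3 points have at least one and at most two fixed points. -/
theorem fixedPoint_contracting_perimeters {X : Type*} [MetricSpace X] [CompleteSpace X]
    (hcard : ∃ a b c : X, a ≠ b ∧ a ≠ c ∧ b ≠ c)
    (T : X → X)
    (hI : ∀ x : X, T x ≠ x → T (T x) ≠ x)
    (hII : ∃ lam : ℝ, 0 < lam ∧ lam < 1 ∧
      ∀ x y z : X, x ≠ y → x ≠ z → y ≠ z →
        dist (T x) (T y) + dist (T y) (T z) + dist (T z) (T x) ≤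
          lam * (dist x y + dist y z + dist z x)) :
    (∃ x : X, T x = x) ∧
      ∀ x y z : X, T x = x → T y = y → T z = z → x = y ∨ x = z ∨ y = z := by
  obtain ⟨lam, hlam0, hlam1, hc⟩ := hII
  constructor
  · -- existence of a fixed point
    obtain ⟨a, -, -, -⟩ := hcard
    by_cases hfix : ∃ n : ℕ, T (T^[n] a) = T^[n] a
    · obtain ⟨n, hn⟩ := hfix
      exact ⟨T^[n] a, hn⟩
    push_neg at hfix
    set x : ℕ → X := fun n => T^[n] a with hxdef
    have hstep : ∀ n, x (n + 1) = T (x n) := fun n => Function.iterate_succ_apply' T n a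
    have h1 : ∀ n, x (n + 1) ≠ x n := by
      intro n; rw [hstep]; exact hfix n
    have h2 : ∀ n, x (n + 2) ≠ x n := by
      intro n
      have h := hI (x n) (hfix n)
      rw [hstep (n + 1), hstep n]
      exact h
    set p : ℕ → ℝ := fun n => dist (x n) (x (n + 1)) + dist (x (n + 1)) (x (n + 2)) +
      dist (x (n + 2)) (x n) with hpdef
    have hppos : ∀ n, 0 < p n := by
      intro n
      have := dist_pos.2 (Ne.symm (h1 n))
      have := dist_nonneg (x := x (n + 1)) (y := x (n + 2))
      have := dist_nonneg (x := x (n + 2)) (y := x n)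
      simp only [hpdef]
      linarith
    have hdle : ∀ n, dist (x n) (x (n + 1)) ≤ p n := by
      intro n
      have := dist_nonneg (x := x (n + 1)) (y := x (n + 2))
      have := dist_nonneg (x := x (n + 2)) (y := x n)
      simp only [hpdef]
      linarith
    have hp : ∀ n, p (n + 1) ≤ lam * p n := by
      intro n
      have h := hc (x n) (x (n + 1)) (x (n + 2)) (Ne.symm (h1 n)) (Ne.symm (h2 n))
        (Ne.symm (h1 (n + 1)))
      rw [← hstep n, ← hstep (n + 1), ← hstep (n + 2)] at h
      exact h
    have hgen : ∀ m k, p (m + k) ≤ lam ^ k * p m := by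
      intro m k
      induction k with
      | zero => simp
      | succ k ih =>
        calc p (m + (k + 1)) = p ((m + k) + 1) := by ring_nf
          _ ≤ lam * p (m + k) := hp _
          _ ≤ lam * (lam ^ k * p m) := by
              exact mul_le_mul_of_nonneg_left ih (le_of_lt hlam0)
          _ = lam ^ (k + 1) * p m := by ring
    have hpn : ∀ n, p n ≤ lam ^ n * p 0 := fun n => by simpa using hgen 0 n
    -- Cauchy
    have hcau : CauchySeq x := by
      apply cauchySeq_of_le_geometric lam (p 0) hlam1
      intro n
      calc dist (x n) (x (n + 1)) ≤ p n := hdle n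
        _ ≤ lam ^ n * p 0 := hpn n
        _ = p 0 * lam ^ n := by ring
    obtain ⟨b, hb⟩ := cauchySeq_tendsto_of_complete hcau
    -- injectivity of the orbit
    have hlt : ∀ m n, m < n → x m ≠ x n := by
      intro m n hmn heq
      have hiter : ∀ k, x (m + k) = x (n + k) := by
        intro k
        have e1 : x (m + k) = T^[k] (x m) := by
          simp only [hxdef]
          rw [Nat.add_comm m k, Function.iterate_add_apply]
        have e2 : x (n + k) = T^[k] (x n) := by
          simp only [hxdef]
          rw [Nat.add_comm n k, Function.iterate_add_apply]
        rw [e1, e2, heq]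
      have hpe : p m = p n := by
        have e0 : x m = x n := by simpa using hiter 0
        have e1 := hiter 1
        have e2 := hiter 2
        simp only [hpdef]
        rw [e0, e1, e2]
      obtain ⟨k, hk⟩ := Nat.exists_eq_add_of_lt hmn
      have hk1 : n = m + (k + 1) := by omega
      have hle : p n ≤ lam ^ (k + 1) * p m := hk1 ▸ hgen m (k + 1)
      have hlamlt : lam ^ (k + 1) < 1 := pow_lt_one₀ (le_of_lt hlam0) hlam1 (Nat.succ_ne_zero k)
      have := hppos m
      nlinarith [hppos n]
    have hinj : Function.Injective x := by
      intro m n h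
      rcases lt_trichotomy m n with h' | h' | h'
      · exact absurd h (hlt m n h')
      · exact h'
      · exact absurd h.symm (hlt n m h')
    -- eventually x n ≠ b
    have hNe : ∃ N : ℕ, ∀ n, N ≤ n → x n ≠ b := by
      by_cases hb' : ∃ m, x m = b
      · obtain ⟨m, hm⟩ := hb'
        refine ⟨m + 1, fun n hn hxn => ?_⟩
        have : n = m := hinj (hxn.trans hm.symm)
        omega
      · push_neg at hb'
        exact ⟨0, fun n _ => hb' n⟩
    obtain ⟨N, hN⟩ := hNe
    refine ⟨b, ?_⟩
    -- limits
    have hdist : Tendsto (fun n => dist (x n) b) atTop (𝓝 0) :=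
      tendsto_iff_dist_tendsto_zero.1 hb
    have hdist' : Tendsto (fun n => dist (x (n + 1)) b) atTop (𝓝 0) :=
      hdist.comp (tendsto_add_atTop_nat 1)
    have hdistb : Tendsto (fun n => dist b (x n)) atTop (𝓝 0) := by
      simpa [dist_comm] using hdist
    have hgap : Tendsto (fun n => dist (x n) (x (n + 1))) atTop (𝓝 0) := by
      apply squeeze_zero (fun n => dist_nonneg)
        (fun n => dist_triangle (x n) b (x (n + 1)))
      have : Tendsto (fun n => dist (x n) b + dist b (x (n + 1))) atTop (𝓝 (0 + 0)) := by
        apply hdist.add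
        simpa [dist_comm] using hdist'
      simpa using this
    set f : ℕ → ℝ := fun n =>
      lam * (dist (x n) (x (n + 1)) + dist (x (n + 1)) b + dist b (x n)) + dist (x (n + 1)) b
      with hfdef
    have hf : Tendsto f atTop (𝓝 (lam * (0 + 0 + 0) + 0)) :=
      (((hgap.add hdist').add hdistb).const_mul lam).add hdist'
    have hf0 : Tendsto f atTop (𝓝 0) := by simpa using hf
    have key : ∀ n, N ≤ n → dist (T b) b ≤ f n := by
      intro n hn
      have h := hc (x n) (x (n + 1)) b (Ne.symm (h1 n)) (hN n hn)
        (hN (n + 1) (by omega))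
      rw [← hstep n, ← hstep (n + 1)] at h
      have htri : dist (T b) b ≤ dist (T b) (x (n + 1)) + dist (x (n + 1)) b :=
        dist_triangle _ _ _
      have hnn1 : (0:ℝ) ≤ dist (x (n + 1)) (x (n + 2)) := dist_nonneg
      have hnn2 : (0:ℝ) ≤ dist (x (n + 2)) (T b) := dist_nonneg
      simp only [hfdef]
      linarith
    have hle0 : dist (T b) b ≤ 0 :=
      ge_of_tendsto hf0 (eventually_atTop.2 ⟨N, key⟩)
    exact dist_le_zero.1 hle0
  · -- at most two fixed points
    intro x y z hx hy hz
    by_contra h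
    push_neg at h
    obtain ⟨hxy, hxz, hyz⟩ := h
    have hcon := hc x y z hxy hxz hyz
    rw [hx, hy, hz] at hcon
    have h1 : 0 < dist x y := dist_pos.2 hxy
    have h2 : (0:ℝ) ≤ dist y z := dist_nonneg
    have h3 : (0:ℝ) ≤ dist z x := dist_nonneg
    nlinarith
end

section
/- Let (X,d) be a complete metric space with at least 3 elements and let T : X → X be a mapping such that (I) for all x ∈ X, if Tx ≠ x then T(Tx) ≠ x, and (II) there exists a constant λ ∈ (0,1) such that max{d(Tx,Ty), d(Ty,Tz), d(Tz,Tx)} ≤ λ·max{d(x,y), d(y,z), d(x,z)} for all pairwise distinct points x, y, z ∈ X. Then T has at least one fixed point, and T has at most two fixed points. -/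
/-- Corollary 4.3: max-type contraction on pairwise distinct triples in a complete metric
space with at least 3 points. -/
theorem fixedPoint_max_contraction {X : Type*} [MetricSpace X] [CompleteSpace X]
    (hcard : ∃ a b c : X, a ≠ b ∧ a ≠ c ∧ b ≠ c)
    (T : X → X)
    (hI : ∀ x : X, T x ≠ x → T (T x) ≠ x)
    (hII : ∃ lam : ℝ, 0 < lam ∧ lam < 1 ∧
      ∀ x y z : X, x ≠ y → x ≠ z → y ≠ z →
        max (dist (T x) (T y)) (max (dist (T y) (T z)) (dist (T z) (T x))) ≤
          lam * max (dist x y) (max (dist y z) (dist x z))) :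
    (∃ x : X, T x = x) ∧
      ∀ x y z : X, T x = x → T y = y → T z = z → x = y ∨ x = z ∨ y = z := by
  obtain ⟨lam, hlam0, hlam1, hc⟩ := hII
  constructor
  · -- existence
    obtain ⟨a, b0, c0, hab, hac, hbc⟩ := hcard
    by_cases hfix : ∃ x : X, T x = x
    · exact hfix
    exfalso
    push_neg at hfix
    set x : ℕ → X := fun n => T^[n] a with hxdef
    have hxs : ∀ n, x (n+1) = T (x n) := fun n => Function.iterate_succ_apply' T n a
    have hne : ∀ n, x (n+1) ≠ x n := by
      intro n
      rw [hxs n]; exact hfix (x n)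
    have hne2 : ∀ n, x (n+2) ≠ x n := by
      intro n
      have h1 : T (x n) ≠ x n := by rw [← hxs n]; exact hne n
      have := hI (x n) h1
      rwa [← hxs n, ← hxs (n+1)] at this
    set M : ℕ → ℝ := fun n =>
      max (dist (x n) (x (n+1))) (max (dist (x (n+1)) (x (n+2))) (dist (x n) (x (n+2))))
      with hMdef
    have hM : ∀ n, M (n+1) ≤ lam * M n := by
      intro n
      have h := hc (x n) (x (n+1)) (x (n+2)) (hne n).symm (hne2 n).symm (hne (n+1)).symm
      rw [← hxs n, ← hxs (n+1), ← hxs (n+2)] at h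
      calc M (n+1)
          = max (dist (x (n+1)) (x (n+1+1)))
              (max (dist (x (n+1+1)) (x (n+1+2))) (dist (x (n+1+2)) (x (n+1)))) := by
            rw [dist_comm (x (n+1+2)) (x (n+1))]
        _ ≤ lam * M n := h
    have hM0 : 0 ≤ M 0 := le_trans dist_nonneg (le_max_left _ _)
    have hMn : ∀ n, M n ≤ lam ^ n * M 0 := by
      intro n
      induction n with
      | zero => simp
      | succ k ih =>
        calc M (k+1) ≤ lam * M k := hM k
          _ ≤ lam * (lam ^ k * M 0) := by
              exact mul_le_mul_of_nonneg_left ih hlam0.le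
          _ = lam ^ (k+1) * M 0 := by ring
    have hdist : ∀ n, dist (x n) (x (n+1)) ≤ M 0 * lam ^ n := by
      intro n
      calc dist (x n) (x (n+1)) ≤ M n := le_max_left _ _
        _ ≤ lam ^ n * M 0 := hMn n
        _ = M 0 * lam ^ n := by ring
    have hcauchy : CauchySeq x := cauchySeq_of_le_geometric lam (M 0) hlam1 hdist
    obtain ⟨p, hp⟩ := cauchySeq_tendsto_of_complete hcauchy
    have hgeo : Filter.Tendsto (fun n : ℕ => M 0 * lam ^ n) Filter.atTop (nhds 0) := by
      simpa using (tendsto_pow_atTop_nhds_zero_of_lt_one hlam0.le hlam1).const_mul (M 0)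
    by_cases hinf : ∀ N : ℕ, ∃ n ≥ N, x n = p
    · have key : ∀ N : ℕ, dist p (T p) ≤ M 0 * lam ^ N := by
        intro N
        obtain ⟨n, hn, hxp⟩ := hinf N
        calc dist p (T p) = dist (x n) (x (n+1)) := by rw [hxs n, hxp]
          _ ≤ M 0 * lam ^ n := hdist n
          _ ≤ M 0 * lam ^ N := by
              exact mul_le_mul_of_nonneg_left
                (pow_le_pow_of_le_one hlam0.le hlam1.le hn) hM0
      have h0 : dist p (T p) ≤ 0 := ge_of_tendsto' hgeo key
      have : T p = p := by
        have := le_antisymm h0 dist_nonneg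
        rw [dist_comm] at this
        exact dist_eq_zero.mp this
      exact hfix p this
    · push_neg at hinf
      obtain ⟨N0, hN0⟩ := hinf
      have hd1 : Filter.Tendsto (fun n : ℕ => dist p (x n)) Filter.atTop (nhds 0) := by
        have := (tendsto_iff_dist_tendsto_zero.mp hp)
        simpa [dist_comm] using this
      have hd2 : Filter.Tendsto (fun n : ℕ => dist p (x (n+1))) Filter.atTop (nhds 0) :=
        hd1.comp (Filter.tendsto_add_atTop_nat 1)
      have hd3 : Filter.Tendsto (fun n : ℕ => dist (x n) (x (n+1))) Filter.atTop (nhds 0) := by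
        apply squeeze_zero (fun n => dist_nonneg) hdist hgeo
      have hb : Filter.Tendsto
          (fun n : ℕ => lam * (dist p (x n) + (dist (x n) (x (n+1)) + dist p (x (n+1)))))
          Filter.atTop (nhds 0) := by
        have := ((hd1.add (hd3.add hd2)).const_mul lam)
        simpa using this
      have hle : ∀ n ≥ N0, dist (x (n+1)) (T p) ≤
          lam * (dist p (x n) + (dist (x n) (x (n+1)) + dist p (x (n+1)))) := by
        intro n hn
        have hn1 : x n ≠ p := hN0 n hn
        have hn2 : x (n+1) ≠ p := hN0 (n+1) (le_trans hn (Nat.le_succ n))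
        have h := hc p (x n) (x (n+1)) hn1.symm hn2.symm (hne n).symm
        rw [← hxs n] at h
        have h1 : dist (T p) (x (n+1)) ≤
            lam * max (dist p (x n)) (max (dist (x n) (x (n+1))) (dist p (x (n+1)))) :=
          le_trans (le_max_left _ _) h
        rw [dist_comm (x (n+1)) (T p)]
        refine le_trans h1 ?_
        apply mul_le_mul_of_nonneg_left _ hlam0.le
        apply max_le
        · nlinarith [dist_nonneg (x := x n) (y := x (n+1)), dist_nonneg (x := p) (y := x (n+1))]
        apply max_le
        · nlinarith [dist_nonneg (x := p) (y := x n), dist_nonneg (x := p) (y := x (n+1))]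
        · nlinarith [dist_nonneg (x := p) (y := x n), dist_nonneg (x := x n) (y := x (n+1))]
      have htend : Filter.Tendsto (fun n : ℕ => x (n+1)) Filter.atTop (nhds (T p)) := by
        rw [tendsto_iff_dist_tendsto_zero]
        apply squeeze_zero' (Filter.Eventually.of_forall fun n => dist_nonneg)
          (Filter.eventually_atTop.mpr ⟨N0, hle⟩) hb
      have htend2 : Filter.Tendsto (fun n : ℕ => x (n+1)) Filter.atTop (nhds p) :=
        hp.comp (Filter.tendsto_add_atTop_nat 1)
      exact hfix p (tendsto_nhds_unique htend htend2)
  · intro x y z hx hy hz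
    by_contra h
    push_neg at h
    obtain ⟨hxy, hxz, hyz⟩ := h
    have h := hc x y z hxy hxz hyz
    rw [hx, hy, hz, dist_comm z x] at h
    have hD : (0:ℝ) < max (dist x y) (max (dist y z) (dist x z)) :=
      lt_of_lt_of_le (dist_pos.mpr hxy) (le_max_left _ _)
    nlinarith
end

section
/- Let (X,d) be a complete metric space with at least 3 elements and let T : X → X be a mapping such that (I) for all x ∈ X, if Tx ≠ x then T(Tx) ≠ x, and (II) there exists a constant λ ∈ (0,1/3) such that d(Tx,Ty) + d(Ty,Tz) + d(Tx,Tz) ≤ λ·[d(x,Tx) + d(y,Ty) + d(z,Tz)] for all pairwise distinct points x, y, z ∈ X. Then T has at least one fixed point, and T has at most two fixed points. -/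
open Filter Topology

/-- Corollary 4.4: Kannan-type perimeter contraction in a complete metric space with at
least 3 points. -/
theorem fixedPoint_kannan_perimeters {X : Type*} [MetricSpace X] [CompleteSpace X]
    (hcard : ∃ a b c : X, a ≠ b ∧ a ≠ c ∧ b ≠ c)
    (T : X → X)
    (hI : ∀ x : X, T x ≠ x → T (T x) ≠ x)
    (hII : ∃ lam : ℝ, 0 < lam ∧ lam < 1 / 3 ∧
      ∀ x y z : X, x ≠ y → x ≠ z → y ≠ z →
        dist (T x) (T y) + dist (T y) (T z) + dist (T x) (T z) ≤
          lam * (dist x (T x) + dist y (T y) + dist z (T z))) :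
    (∃ x : X, T x = x) ∧
      ∀ x y z : X, T x = x → T y = y → T z = z → x = y ∨ x = z ∨ y = z := by
  obtain ⟨lam, hl0, hl13, hC⟩ := hII
  constructor
  · -- existence
    by_contra hfix
    push_neg at hfix
    obtain ⟨a, -, -, -⟩ := hcard
    set f : ℕ → X := fun n => T^[n] a with hf
    have hstep : ∀ n, f (n+1) = T (f n) := fun n => Function.iterate_succ_apply' T n a
    have e1 : ∀ n, T (f n) = f (n+1) := fun n => (hstep n).symm
    have e2 : ∀ n, T (f (n+1)) = f (n+2) := fun n => (hstep (n+1)).symm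
    have hne1 : ∀ n, f n ≠ f (n+1) := fun n h => hfix (f n) ((h.trans (hstep n)).symm)
    have hne2 : ∀ n, f n ≠ f (n+2) := by
      intro n h
      have h2 : f (n+2) = T (T (f n)) := by rw [hstep (n+1), hstep n]
      exact hI (f n) (hfix (f n)) ((h.trans h2).symm)
    set s : ℕ → ℝ := fun n => dist (f n) (f (n+1)) + dist (f (n+1)) (f (n+2)) with hsdef
    have hsn : ∀ n, s n = dist (f n) (f (n+1)) + dist (f (n+1)) (f (n+2)) := fun n => rfl
    have h1l : (0:ℝ) < 1 - lam := by linarith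
    set r : ℝ := lam / (1 - lam) with hrdef
    have hr0 : 0 < r := div_pos hl0 h1l
    have hr1 : r < 1 := (div_lt_one h1l).2 (by linarith)
    have key : ∀ n, s (n+1) ≤ r * s n := by
      intro n
      have h1 := hC (f n) (f (n+1)) (f (n+2)) (hne1 n) (hne2 n) (hne1 (n+1))
      rw [e1 n, e2 n, show T (f (n+2)) = f (n+3) from (hstep (n+2)).symm] at h1
      show dist (f (n+1)) (f (n+2)) + dist (f (n+2)) (f (n+3)) ≤
        r * (dist (f n) (f (n+1)) + dist (f (n+1)) (f (n+2)))
      rw [hrdef, div_mul_eq_mul_div, le_div_iff₀ h1l]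
      nlinarith [(dist_nonneg : (0:ℝ) ≤ dist (f (n+1)) (f (n+3))),
        (dist_nonneg : (0:ℝ) ≤ dist (f (n+1)) (f (n+2))), (dist_nonneg : (0:ℝ) ≤ dist (f n) (f (n+1))),
        (dist_nonneg : (0:ℝ) ≤ dist (f (n+2)) (f (n+3)))]
    have spos : ∀ n, 0 < s n := by
      intro n
      have h1 : 0 < dist (f n) (f (n+1)) := dist_pos.2 (hne1 n)
      have h2 : (0:ℝ) ≤ dist (f (n+1)) (f (n+2)) := dist_nonneg
      rw [hsn]; linarith
    have sgeo : ∀ n, s n ≤ s 0 * r ^ n := by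
      intro n
      induction n with
      | zero => simp
      | succ k ih =>
        calc s (k+1) ≤ r * s k := key k
          _ ≤ r * (s 0 * r ^ k) := by nlinarith
          _ = s 0 * r ^ (k+1) := by ring
    have sshift : ∀ n k, s (n+k) ≤ r ^ k * s n := by
      intro n k
      induction k with
      | zero => simp
      | succ j ih =>
        calc s (n+(j+1)) = s ((n+j)+1) := by ring_nf
          _ ≤ r * s (n+j) := key (n+j)
          _ ≤ r * (r ^ j * s n) := by nlinarith
          _ = r ^ (j+1) * s n := by ring
    have finj : ∀ n m, n < m → f n ≠ f m := by
      intro n m hnm heq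
      have hiter : ∀ k, f (n+k) = f (m+k) := by
        intro k
        induction k with
        | zero => simpa using heq
        | succ j ih =>
          rw [show n+(j+1) = (n+j)+1 from rfl, show m+(j+1) = (m+j)+1 from rfl,
            hstep, hstep, ih]
      have hs_eq : s n = s m := by
        rw [hsn, hsn, show f n = f m from by simpa using hiter 0, hiter 1, hiter 2]
      have h1 := sshift n (m-n)
      rw [Nat.add_sub_cancel' hnm.le] at h1
      have hpow : r ^ (m-n) < 1 := pow_lt_one₀ hr0.le hr1 (Nat.sub_ne_zero_of_lt hnm)
      nlinarith [spos n]
    have hdist : ∀ n, dist (f n) (f (n+1)) ≤ s 0 * r ^ n := by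
      intro n
      have h2 : (0:ℝ) ≤ dist (f (n+1)) (f (n+2)) := dist_nonneg
      have := sgeo n
      rw [hsn] at this
      linarith
    have hcau : CauchySeq f := cauchySeq_of_le_geometric r (s 0) hr1 hdist
    obtain ⟨x, hxlim⟩ := cauchySeq_tendsto_of_complete hcau
    obtain ⟨N, hN⟩ : ∃ N, ∀ n, N ≤ n → f n ≠ x := by
      by_cases h : ∃ m, f m = x
      · obtain ⟨m, hm⟩ := h
        exact ⟨m+1, fun n hn he => (finj m n (by omega) (hm.trans he.symm)).elim⟩
      · push_neg at h
        exact ⟨0, fun n _ => h n⟩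
    have hest : ∀ n, N ≤ n → dist x (T x) ≤ dist x (f (n+2)) + lam * s n + lam * dist x (T x) := by
      intro n hn
      have h1 := hC (f n) (f (n+1)) x (hne1 n) (hN n hn) (hN (n+1) (by omega))
      rw [e1 n, e2 n] at h1
      have htri := dist_triangle x (f (n+2)) (T x)
      rw [hsn]
      have h2 : (0:ℝ) ≤ dist (f (n+1)) (T x) := dist_nonneg
      have h3 : (0:ℝ) ≤ dist (f (n+1)) (f (n+2)) := dist_nonneg
      nlinarith
    have hf2 : Tendsto (fun n => f (n+2)) atTop (nhds x) := hxlim.comp (tendsto_add_atTop_nat 2)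
    have hd2 : Tendsto (fun n => dist x (f (n+2))) atTop (nhds 0) := by
      have h := hf2.dist (tendsto_const_nhds : Tendsto (fun _ : ℕ => x) atTop (nhds x))
      simpa [dist_comm] using h
    have hs0 : Tendsto s atTop (nhds 0) := by
      apply squeeze_zero (fun n => (spos n).le) sgeo
      have := (tendsto_pow_atTop_nhds_zero_of_lt_one hr0.le hr1).const_mul (s 0)
      simpa using this
    have hlim : Tendsto (fun n => dist x (f (n+2)) + lam * s n + lam * dist x (T x)) atTop
        (nhds (0 + lam * 0 + lam * dist x (T x))) :=
      (hd2.add (hs0.const_mul lam)).add tendsto_const_nhds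
    have hfinal : dist x (T x) ≤ 0 + lam * 0 + lam * dist x (T x) :=
      ge_of_tendsto hlim (eventually_atTop.2 ⟨N, hest⟩)
    have hd0 : dist x (T x) = 0 := by nlinarith [(dist_nonneg : (0:ℝ) ≤ dist x (T x))]
    exact hfix x (dist_eq_zero.1 hd0).symm
  · -- at most two fixed points
    intro x y z hxx hyy hzz
    by_contra h
    push_neg at h
    obtain ⟨hxy, hxz, hyz⟩ := h
    have h1 := hC x y z hxy hxz hyz
    rw [hxx, hyy, hzz] at h1
    simp only [dist_self] at h1
    nlinarith [dist_pos.2 hxy, (dist_nonneg : (0:ℝ) ≤ dist y z), (dist_nonneg : (0:ℝ) ≤ dist x z)]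
end

section
/- Let (X,d) be a complete metric space with at least 3 elements and let T : X → X be a mapping such that (I) for all x ∈ X, if Tx ≠ x then T(Tx) ≠ x, and (II) there exist nonnegative constants a₁, a₂, a₃, a₄ with 0 < a₁ + a₂ + a₃ + a₄ < 1 such that d(Tx,Ty) + d(Ty,Tz) + d(Tx,Tz) ≤ a₁·d(x,Tx) + a₂·d(y,Ty) + a₃·d(z,Tz) + a₄·[d(x,y) + d(y,z) + d(x,z)] for all pairwise distinct points x, y, z ∈ X. Then T has at least one fixed point, and T has at most two fixed points. -/
/-- Corollary 4.5 (sum form): Reich-type perimeter contraction in a complete metric space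
with at least 3 points. -/
theorem fixedPoint_reich_perimeters {X : Type*} [MetricSpace X] [CompleteSpace X]
    (hcard : ∃ a b c : X, a ≠ b ∧ a ≠ c ∧ b ≠ c)
    (T : X → X)
    (hI : ∀ x : X, T x ≠ x → T (T x) ≠ x)
    (hII : ∃ a₁ a₂ a₃ a₄ : ℝ, 0 ≤ a₁ ∧ 0 ≤ a₂ ∧ 0 ≤ a₃ ∧ 0 ≤ a₄ ∧
      0 < a₁ + a₂ + a₃ + a₄ ∧ a₁ + a₂ + a₃ + a₄ < 1 ∧
      ∀ x y z : X, x ≠ y → x ≠ z → y ≠ z →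
        dist (T x) (T y) + dist (T y) (T z) + dist (T x) (T z) ≤
          a₁ * dist x (T x) + a₂ * dist y (T y) + a₃ * dist z (T z) +
            a₄ * (dist x y + dist y z + dist x z)) :
    (∃ x : X, T x = x) ∧
      ∀ x y z : X, T x = x → T y = y → T z = z → x = y ∨ x = z ∨ y = z := by
  obtain ⟨a₁, a₂, a₃, a₄, h1, h2, h3, h4, hpos, hsum, hC⟩ := hII
  constructor
  · -- existence
    obtain ⟨x₀, -⟩ := hcard
    by_cases hfix : ∃ n, T (T^[n] x₀) = T^[n] x₀
    · obtain ⟨n, hn⟩ := hfix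
      exact ⟨T^[n] x₀, hn⟩
    · push_neg at hfix
      set f : ℕ → X := fun n => T^[n] x₀ with hf
      have hfs : ∀ n, f (n + 1) = T (f n) := fun n => Function.iterate_succ_apply' T n x₀
      have hne1 : ∀ n, f (n + 1) ≠ f n := by
        intro n; rw [hfs]; exact hfix n
      have hne2 : ∀ n, f (n + 2) ≠ f n := by
        intro n
        have e : f (n + 2) = T (T (f n)) := by
          rw [show n + 2 = (n + 1) + 1 from rfl, hfs, hfs]
        rw [e]; exact hI (f n) (hfix n)
      set d : ℕ → ℝ := fun n => dist (f n) (f (n + 1)) with hd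
      set P : ℕ → ℝ := fun n =>
        dist (f n) (f (n + 1)) + dist (f (n + 1)) (f (n + 2)) + dist (f n) (f (n + 2)) with hP
      have hd_pos : ∀ n, 0 < d n := fun n => dist_pos.2 (Ne.symm (hne1 n))
      have hPnn : ∀ n, 0 ≤ P n := fun n => by
        have := dist_nonneg (x := f n) (y := f (n + 1))
        have := dist_nonneg (x := f (n + 1)) (y := f (n + 2))
        have := dist_nonneg (x := f n) (y := f (n + 2))
        simp only [hP]; linarith
      have ha₃ : a₃ < 1 := by linarith
      have h1a₃ : (0 : ℝ) < 1 - a₃ := by linarith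
      set κ : ℝ := (a₁ + a₂ + a₄) / (1 - a₃) with hκ
      have hκ0 : 0 ≤ κ := div_nonneg (by linarith) h1a₃.le
      have hκ1 : κ < 1 := (div_lt_one h1a₃).2 (by linarith)
      have hdP : ∀ n, d n ≤ P n := by
        intro n
        have := dist_nonneg (x := f (n + 1)) (y := f (n + 2))
        have := dist_nonneg (x := f n) (y := f (n + 2))
        simp only [hd, hP]; linarith
      have key : ∀ n, P (n + 1) ≤ κ * P n := by
        intro n
        have h := hC (f n) (f (n + 1)) (f (n + 2)) (Ne.symm (hne1 n)) (Ne.symm (hne2 n))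
          (Ne.symm (hne1 (n + 1)))
        rw [← hfs n, ← hfs (n + 1), ← hfs (n + 2)] at h
        simp only [show n + 1 + 1 = n + 2 from rfl, show n + 2 + 1 = n + 3 from rfl] at h
        -- h : dist (f (n+1)) (f (n+2)) + dist (f (n+2)) (f (n+3)) + dist (f (n+1)) (f (n+3)) ≤ ...
        have hP1 : P (n + 1) =
            dist (f (n + 1)) (f (n + 2)) + dist (f (n + 2)) (f (n + 3)) +
              dist (f (n + 1)) (f (n + 3)) := by
          simp only [hP, show n + 1 + 1 = n + 2 from rfl, show n + 1 + 2 = n + 3 from rfl]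
        have hd2 : dist (f (n + 2)) (f (n + 3)) ≤ P (n + 1) := by
          have := dist_nonneg (x := f (n + 1)) (y := f (n + 2))
          have := dist_nonneg (x := f (n + 1)) (y := f (n + 3))
          rw [hP1]; linarith
        have hdnP : dist (f n) (f (n + 1)) ≤ P n := by
          have := dist_nonneg (x := f (n + 1)) (y := f (n + 2))
          have := dist_nonneg (x := f n) (y := f (n + 2))
          simp only [hP]; linarith
        have hdn1P : dist (f (n + 1)) (f (n + 2)) ≤ P n := by
          have := dist_nonneg (x := f n) (y := f (n + 1))
          have := dist_nonneg (x := f n) (y := f (n + 2))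
          simp only [hP]; linarith
        rw [hκ, div_mul_eq_mul_div, le_div_iff₀ h1a₃]
        have hPn : P n = dist (f n) (f (n + 1)) + dist (f (n + 1)) (f (n + 2)) +
            dist (f n) (f (n + 2)) := rfl
        nlinarith [mul_le_mul_of_nonneg_left hdnP h1,
          mul_le_mul_of_nonneg_left hdn1P h2,
          mul_le_mul_of_nonneg_left hd2 h3, hPnn n, hPnn (n + 1)]
      have geom : ∀ n, P n ≤ P 0 * κ ^ n := by
        intro n
        induction n with
        | zero => simp
        | succ n ih =>
          calc P (n + 1) ≤ κ * P n := key n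
            _ ≤ κ * (P 0 * κ ^ n) := by
                exact mul_le_mul_of_nonneg_left ih hκ0
            _ = P 0 * κ ^ (n + 1) := by ring
      have hdle : ∀ n, dist (f n) (f (n + 1)) ≤ P 0 * κ ^ n := fun n =>
        le_trans (hdP n) (geom n)
      have hcauchy : CauchySeq f := cauchySeq_of_le_geometric κ (P 0) hκ1 hdle
      obtain ⟨xs, hxs⟩ := cauchySeq_tendsto_of_complete hcauchy
      have hgeo0 : Filter.Tendsto (fun n => P 0 * κ ^ n) Filter.atTop (nhds 0) := by
        have := (tendsto_pow_atTop_nhds_zero_of_lt_one hκ0 hκ1).const_mul (P 0)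
        simpa using this
      have hd0 : Filter.Tendsto d Filter.atTop (nhds 0) :=
        squeeze_zero (fun n => dist_nonneg) hdle hgeo0
      -- eventually f n ≠ xs
      have hNe : ∃ N, ∀ n, N ≤ n → f n ≠ xs := by
        by_contra hcon
        push_neg at hcon
        obtain ⟨m, -, hm⟩ := hcon 0
        obtain ⟨m', hm'le, hm'⟩ := hcon (m + 1)
        set p := m' - m with hp
        have hp0 : 0 < p := by omega
        have hper : ∀ k, f (m + k * p) = f m := by
          intro k
          induction k with
          | zero => simp
          | succ k ih =>
            have e1 : m + (k + 1) * p = p + (m + k * p) := by ring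
            rw [e1]
            have e2 : f (p + (m + k * p)) = T^[p] (f (m + k * p)) :=
              Function.iterate_add_apply T p (m + k * p) x₀
            rw [e2, ih]
            have e3 : T^[p] (f m) = f (p + m) :=
              (Function.iterate_add_apply T p m x₀).symm
            rw [e3, show p + m = m' from by omega, hm', hm]
        have hdper : ∀ k, d (m + k * p) = d m := by
          intro k
          show dist (f (m + k * p)) (f (m + k * p + 1)) = dist (f m) (f (m + 1))
          rw [hfs (m + k * p), hper k, ← hfs m]
        have hsub : Filter.Tendsto (fun k => m + k * p) Filter.atTop Filter.atTop := by
          apply Filter.tendsto_atTop_mono (f := id)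
          · intro k
            simp only [id]
            calc k ≤ k * p := Nat.le_mul_of_pos_right k hp0
              _ ≤ m + k * p := Nat.le_add_left _ _
          · exact Filter.tendsto_id
        have hcomp := hd0.comp hsub
        have hconst : Filter.Tendsto (fun _ : ℕ => d m) Filter.atTop (nhds 0) := by
          have : (d ∘ fun k => m + k * p) = fun _ => d m := by
            funext k; simp [Function.comp, hdper k]
          rwa [this] at hcomp
        have := tendsto_nhds_unique hconst tendsto_const_nhds
        exact absurd this.symm (ne_of_gt (hd_pos m))
      obtain ⟨N, hNe⟩ := hNe
      set ε := dist xs (T xs) with hε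
      have hmain : ∀ n, N ≤ n → ε ≤ dist xs (f (n + 2)) +
          (a₁ * d n + a₂ * d (n + 1) + a₃ * ε +
            a₄ * (d n + dist (f (n + 1)) xs + dist (f n) xs)) := by
        intro n hn
        have h := hC (f n) (f (n + 1)) xs (Ne.symm (hne1 n)) (hNe n hn)
          (hNe (n + 1) (by omega))
        rw [← hfs n, ← hfs (n + 1)] at h
        simp only [show n + 1 + 1 = n + 2 from rfl] at h
        have htri : ε ≤ dist xs (f (n + 2)) + dist (f (n + 2)) (T xs) :=
          dist_triangle xs (f (n + 2)) (T xs)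
        have hnn1 : 0 ≤ dist (f (n + 1)) (f (n + 2)) := dist_nonneg
        have hnn2 : 0 ≤ dist (f (n + 1)) (T xs) := dist_nonneg
        simp only [hd]
        linarith
      have hd1 : Filter.Tendsto (fun n => d (n + 1)) Filter.atTop (nhds 0) :=
        hd0.comp (Filter.tendsto_add_atTop_nat 1)
      have hdist : ∀ k : ℕ, Filter.Tendsto (fun n => dist (f (n + k)) xs)
          Filter.atTop (nhds 0) := by
        intro k
        have h1' := hxs.comp (Filter.tendsto_add_atTop_nat k)
        have := tendsto_iff_dist_tendsto_zero.mp h1'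
        simpa [Function.comp] using this
      have hdist' : Filter.Tendsto (fun n => dist xs (f (n + 2))) Filter.atTop (nhds 0) := by
        simpa [dist_comm] using hdist 2
      have hdist0 : Filter.Tendsto (fun n => dist (f n) xs) Filter.atTop (nhds 0) := by
        simpa using hdist 0
      have hg : Filter.Tendsto (fun n => dist xs (f (n + 2)) +
          (a₁ * d n + a₂ * d (n + 1) + a₃ * ε +
            a₄ * (d n + dist (f (n + 1)) xs + dist (f n) xs)))
          Filter.atTop (nhds (a₃ * ε)) := by
        have t1 := (hd0.const_mul a₁)
        have t2 := (hd1.const_mul a₂)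
        have t3 : Filter.Tendsto (fun _ : ℕ => a₃ * ε) Filter.atTop (nhds (a₃ * ε)) :=
          tendsto_const_nhds
        have t4 := (((hd0.add (hdist 1)).add hdist0).const_mul a₄)
        have := (hdist'.add ((((t1.add t2).add t3).add t4)))
        simpa using this
      have hle : ε ≤ a₃ * ε :=
        ge_of_tendsto hg (Filter.eventually_atTop.2 ⟨N, hmain⟩)
      have hε0 : 0 ≤ ε := dist_nonneg
      have : ε = 0 := by nlinarith
      exact ⟨xs, by rw [← dist_eq_zero, dist_comm]; exact this⟩
  · -- at most two fixed points
    intro x y z hx hy hz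
    by_contra hcon
    push_neg at hcon
    obtain ⟨hxy, hxz, hyz⟩ := hcon
    have h := hC x y z hxy hxz hyz
    rw [hx, hy, hz] at h
    simp only [dist_self, mul_zero, zero_add] at h
    have hper : 0 < dist x y := dist_pos.2 hxy
    have ha₄ : a₄ < 1 := by linarith
    nlinarith [dist_nonneg (x := y) (y := z), dist_nonneg (x := x) (y := z)]
end

section
/- Let (X,d) be a complete metric space with at least 3 elements and let T : X → X be a mapping such that (I) for all x ∈ X, if Tx ≠ x then T(Tx) ≠ x, and (II) there exist nonnegative constants a₁, a₂, a₃, a₄ with 0 < a₁ + a₂ + a₃ + a₄ < 1 such that max{d(Tx,Ty), d(Ty,Tz), d(Tx,Tz)} ≤ a₁·d(x,Tx) + a₂·d(y,Ty) + a₃·d(z,Tz) + a₄·max{d(x,y), d(y,z), d(x,z)} for all pairwise distinct points x, y, z ∈ X. Then T has at least one fixed point, and T has at most two fixed points. -/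
/-- Corollary 4.6 (max form): Reich-type max contraction in a complete metric space with
at least 3 points. -/
theorem fixedPoint_reich_max {X : Type*} [MetricSpace X] [CompleteSpace X]
    (hcard : ∃ a b c : X, a ≠ b ∧ a ≠ c ∧ b ≠ c)
    (T : X → X)
    (hI : ∀ x : X, T x ≠ x → T (T x) ≠ x)
    (hII : ∃ a₁ a₂ a₃ a₄ : ℝ, 0 ≤ a₁ ∧ 0 ≤ a₂ ∧ 0 ≤ a₃ ∧ 0 ≤ a₄ ∧
      0 < a₁ + a₂ + a₃ + a₄ ∧ a₁ + a₂ + a₃ + a₄ < 1 ∧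
      ∀ x y z : X, x ≠ y → x ≠ z → y ≠ z →
        max (dist (T x) (T y)) (max (dist (T y) (T z)) (dist (T x) (T z))) ≤
          a₁ * dist x (T x) + a₂ * dist y (T y) + a₃ * dist z (T z) +
            a₄ * max (dist x y) (max (dist y z) (dist x z))) :
    (∃ x : X, T x = x) ∧
      ∀ x y z : X, T x = x → T y = y → T z = z → x = y ∨ x = z ∨ y = z := by
  obtain ⟨a₁, a₂, a₃, a₄, ha₁, ha₂, ha₃, ha₄, hpos, hsum, hcon⟩ := hII
  constructor
  · -- existence of a fixed point
    by_contra hno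
    push_neg at hno
    obtain ⟨x₀, y₀, z₀, -, -, -⟩ := hcard
    set p : ℕ → X := fun n => T^[n] x₀ with hp
    have hstep : ∀ n, p (n + 1) = T (p n) := fun n => Function.iterate_succ_apply' T n x₀
    have hfix : ∀ x : X, T x ≠ x := hno
    have hne1 : ∀ n, p n ≠ p (n + 1) := by
      intro n h
      rw [hstep n] at h
      exact hfix (p n) h.symm
    have hne2 : ∀ n, p n ≠ p (n + 2) := by
      intro n h
      have h2 : p (n + 2) = T (T (p n)) := by
        rw [show p (n+2) = T (p (n+1)) from hstep (n+1), hstep n]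
      rw [h2] at h
      exact hI (p n) (hfix (p n)) h.symm
    set M : ℕ → ℝ := fun n =>
      max (dist (p n) (p (n+1))) (max (dist (p (n+1)) (p (n+2))) (dist (p n) (p (n+2)))) with hM
    have hdenom : (0:ℝ) < 1 - a₃ := by linarith
    set r : ℝ := (a₁ + a₂ + a₄) / (1 - a₃) with hr
    have hr0 : 0 ≤ r := div_nonneg (by linarith) hdenom.le
    have hr1 : r < 1 := (div_lt_one hdenom).mpr (by linarith)
    have hkey : ∀ n, M (n + 1) ≤ r * M n := by
      intro n
      have e := hcon (p n) (p (n+1)) (p (n+2)) (hne1 n) (hne2 n) (hne1 (n+1))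
      rw [show T (p n) = p (n+1) from (hstep n).symm,
        show T (p (n+1)) = p (n+2) from (hstep (n+1)).symm,
        show T (p (n+2)) = p (n+3) from (hstep (n+2)).symm] at e
      show max (dist (p (n+1)) (p (n+2))) (max (dist (p (n+2)) (p (n+3))) (dist (p (n+1)) (p (n+3)))) ≤
        r * max (dist (p n) (p (n+1))) (max (dist (p (n+1)) (p (n+2))) (dist (p n) (p (n+2))))
      set A := dist (p n) (p (n+1)) with hA
      set B := dist (p (n+1)) (p (n+2)) with hB
      set C := dist (p (n+2)) (p (n+3)) with hC
      set E := dist (p (n+1)) (p (n+3)) with hE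
      set F := dist (p n) (p (n+2)) with hF
      have hAm : A ≤ max A (max B F) := le_max_left _ _
      have hBm : B ≤ max A (max B F) := le_trans (le_max_left _ _) (le_max_right _ _)
      have hCm : C ≤ max B (max C E) := le_trans (le_max_left _ _) (le_max_right _ _)
      have hm0 : 0 ≤ max A (max B F) := le_trans dist_nonneg hAm
      rw [hr, div_mul_eq_mul_div, le_div_iff₀ hdenom]
      nlinarith [mul_le_mul_of_nonneg_left hAm ha₁, mul_le_mul_of_nonneg_left hBm ha₂,
        mul_le_mul_of_nonneg_left hCm ha₃]
    have hMn : ∀ n, M n ≤ M 0 * r ^ n := by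
      intro n
      induction n with
      | zero => simp
      | succ k ih =>
        calc M (k+1) ≤ r * M k := hkey k
        _ ≤ r * (M 0 * r ^ k) := mul_le_mul_of_nonneg_left ih hr0
        _ = M 0 * r ^ (k+1) := by ring
    have hcauchy : CauchySeq p := by
      apply cauchySeq_of_le_geometric r (M 0) hr1
      intro n
      calc dist (p n) (p (n+1)) ≤ M n := le_max_left _ _
      _ ≤ M 0 * r ^ n := hMn n
    obtain ⟨q, hq⟩ := cauchySeq_tendsto_of_complete hcauchy
    have hTq : T q ≠ q := hfix q
    -- pick indices avoiding q
    have pick : ∀ N : ℕ, ∃ n, N ≤ n ∧ p n ≠ q ∧ p (n+1) ≠ q := by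
      intro N
      by_cases hN : p N = q
      · refine ⟨N + 1, by omega, ?_, ?_⟩
        · rw [hstep N, hN]; exact hfix q
        · rw [show p (N+1+1) = T (p (N+1)) from hstep (N+1), hstep N, hN]
          exact hI q (hfix q)
      · by_cases hN1 : p (N+1) = q
        · refine ⟨N + 2, by omega, ?_, ?_⟩
          · rw [show p (N+2) = T (p (N+1)) from hstep (N+1), hN1]; exact hfix q
          · rw [show p (N+2+1) = T (p (N+2)) from hstep (N+2),
              show p (N+2) = T (p (N+1)) from hstep (N+1), hN1]
            exact hI q (hfix q)
        · exact ⟨N, le_rfl, hN, hN1⟩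
    have key : ∀ ε : ℝ, 0 < ε → (1 - a₁) * dist q (T q) ≤ 7 * ε := by
      intro ε hε
      obtain ⟨N, hN⟩ := Metric.tendsto_atTop.mp hq ε hε
      obtain ⟨n, hnN, hq1, hq2⟩ := pick N
      have d1 : dist (p n) q < ε := hN n hnN
      have d2 : dist (p (n+1)) q < ε := hN (n+1) (by omega)
      have d3 : dist (p (n+2)) q < ε := hN (n+2) (by omega)
      have e := hcon q (p n) (p (n+1)) (Ne.symm hq1) (Ne.symm hq2) (hne1 n)
      rw [show T (p n) = p (n+1) from (hstep n).symm,
        show T (p (n+1)) = p (n+2) from (hstep (n+1)).symm] at e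
      have e1 : dist (T q) (p (n+1)) ≤
          a₁ * dist q (T q) + a₂ * dist (p n) (p (n+1)) + a₃ * dist (p (n+1)) (p (n+2)) +
            a₄ * max (dist q (p n)) (max (dist (p n) (p (n+1))) (dist q (p (n+1)))) :=
        le_trans (le_max_left _ _) e
      have t1 : dist (p n) (p (n+1)) < 2 * ε := by
        calc dist (p n) (p (n+1)) ≤ dist (p n) q + dist q (p (n+1)) := dist_triangle _ _ _
        _ < 2 * ε := by rw [dist_comm q (p (n+1))]; linarith
      have t2 : dist (p (n+1)) (p (n+2)) < 2 * ε := by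
        calc dist (p (n+1)) (p (n+2)) ≤ dist (p (n+1)) q + dist q (p (n+2)) := dist_triangle _ _ _
        _ < 2 * ε := by rw [dist_comm q (p (n+2))]; linarith
      have t3 : max (dist q (p n)) (max (dist (p n) (p (n+1))) (dist q (p (n+1)))) < 2 * ε := by
        apply max_lt
        · rw [dist_comm]; linarith
        · apply max_lt t1
          rw [dist_comm]; linarith
      have b2 : a₂ * dist (p n) (p (n+1)) ≤ a₂ * (2 * ε) :=
        mul_le_mul_of_nonneg_left t1.le ha₂
      have b3 : a₃ * dist (p (n+1)) (p (n+2)) ≤ a₃ * (2 * ε) :=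
        mul_le_mul_of_nonneg_left t2.le ha₃
      have b4 : a₄ * max (dist q (p n)) (max (dist (p n) (p (n+1))) (dist q (p (n+1)))) ≤
          a₄ * (2 * ε) := mul_le_mul_of_nonneg_left t3.le ha₄
      have c2 : a₂ * (2 * ε) ≤ 1 * (2 * ε) :=
        mul_le_mul_of_nonneg_right (by linarith) (by linarith)
      have c3 : a₃ * (2 * ε) ≤ 1 * (2 * ε) :=
        mul_le_mul_of_nonneg_right (by linarith) (by linarith)
      have c4 : a₄ * (2 * ε) ≤ 1 * (2 * ε) :=
        mul_le_mul_of_nonneg_right (by linarith) (by linarith)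
      have tri : dist q (T q) ≤ dist q (p (n+1)) + dist (T q) (p (n+1)) := by
        rw [dist_comm (T q) (p (n+1))]
        exact dist_triangle _ _ _
      have dq : dist q (p (n+1)) < ε := by rw [dist_comm]; linarith
      nlinarith
    have hD0 : dist q (T q) = 0 := by
      by_contra hD
      have hDpos : 0 < dist q (T q) := lt_of_le_of_ne dist_nonneg (Ne.symm hD)
      have hA1 : 0 < 1 - a₁ := by linarith
      have hεpos : 0 < (1 - a₁) * dist q (T q) / 14 := by positivity
      have := key _ hεpos
      nlinarith
    exact hTq (dist_eq_zero.mp (by rw [dist_comm]; exact hD0))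
  · -- at most two fixed points
    intro x y z hx hy hz
    by_contra hxyz
    push_neg at hxyz
    obtain ⟨hxy, hxz, hyz⟩ := hxyz
    have e := hcon x y z hxy hxz hyz
    rw [hx, hy, hz] at e
    simp only [dist_self, mul_zero] at e
    have hm : 0 < max (dist x y) (max (dist y z) (dist x z)) :=
      lt_of_lt_of_le (dist_pos.mpr hxy) (le_max_left _ _)
    nlinarith
end

section
/- Let G be a G-metric on a nonempty set X, let λ ∈ (0,1/3) and let T : X → X satisfy G(Tx,Ty,Tz) ≤ λ·[G(x,Tx,Tx) + G(y,Ty,Ty) + G(z,Tz,Tz)] for all x, y, z ∈ X. Define δ : X × X → [0,∞) by δ(x,y) = max{G(x,y,y), G(y,x,x)}. Then δ(Tx,Ty) ≤ 3λ·max{δ(x,Tx), δ(y,Ty)} for all x, y ∈ X. -/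
open Filter

/-- If `G (T x) (T y) (T z) ≤ λ (G x (T x) (T x) + G y (T y) (T y) + G z (T z) (T z))`
for all `x y z`, then the associated metric `δ x y = max {G x y y, G y x x}` satisfies
`δ (T x) (T y) ≤ 3 λ max {δ x (T x), δ y (T y)}`. -/
theorem delta_kannan_of_G_kannan {X : Type*} [Nonempty X]
    (G : X → X → X → ℝ) (hG : IsGMetric G)
    (lam : ℝ) (hlam0 : 0 < lam) (hlam1 : lam < 1 / 3)
    (T : X → X)
    (hT : ∀ x y z : X, G (T x) (T y) (T z) ≤
      lam * (G x (T x) (T x) + G y (T y) (T y) + G z (T z) (T z)))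
    (δ : X → X → ℝ)
    (hδ : ∀ x y : X, δ x y = max (G x y y) (G y x x)) :
    ∀ x y : X, δ (T x) (T y) ≤ 3 * lam * max (δ x (T x)) (δ y (T y)) := by
  intro x y
  have hx : G x (T x) (T x) ≤ max (δ x (T x)) (δ y (T y)) := by
    rw [hδ x (T x)]; exact le_max_of_le_left (le_max_left _ _)
  have hy : G y (T y) (T y) ≤ max (δ x (T x)) (δ y (T y)) := by
    rw [hδ y (T y)]; exact le_max_of_le_right (le_max_left _ _)
  rw [hδ (T x) (T y)]
  have h1 : G (T x) (T y) (T y) ≤ 3 * lam * max (δ x (T x)) (δ y (T y)) := by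
    calc G (T x) (T y) (T y) ≤ lam * (G x (T x) (T x) + G y (T y) (T y) + G y (T y) (T y)) :=
          hT x y y
      _ ≤ lam * (3 * max (δ x (T x)) (δ y (T y))) := by
          apply mul_le_mul_of_nonneg_left _ hlam0.le
          linarith
      _ = 3 * lam * max (δ x (T x)) (δ y (T y)) := by ring
  have h2 : G (T y) (T x) (T x) ≤ 3 * lam * max (δ x (T x)) (δ y (T y)) := by
    calc G (T y) (T x) (T x) ≤ lam * (G y (T y) (T y) + G x (T x) (T x) + G x (T x) (T x)) :=
          hT y x x
      _ ≤ lam * (3 * max (δ x (T x)) (δ y (T y))) := by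
          apply mul_le_mul_of_nonneg_left _ hlam0.le
          linarith
      _ = 3 * lam * max (δ x (T x)) (δ y (T y)) := by ring
  exact max_le h1 h2
end

section
/- Let G be a G-metric on a nonempty set X, let a₁, a₂, a₃, a₄ be nonnegative constants with 0 < a₁ + a₂ + a₃ + a₄ < 1, and let T : X → X satisfy G(Tx,Ty,Tz) ≤ a₁·G(x,Tx,Tx) + a₂·G(y,Ty,Ty) + a₃·G(z,Tz,Tz) + a₄·G(x,y,z) for all x, y, z ∈ X. Define δ : X × X → [0,∞) by δ(x,y) = max{G(x,y,y), G(y,x,x)}. Then δ(Tx,Ty) ≤ (a₁ + a₂ + a₃ + a₄)·max{δ(x,Tx), δ(y,Ty), δ(x,y)} for all x, y ∈ X. -/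
open Filter

/-- Reich-type condition on `G` for all triples yields a Ćirić-type condition on the
associated metric `δ x y = max {G x y y, G y x x}`. -/
theorem delta_ciric_of_G_reich {X : Type*} [Nonempty X]
    (G : X → X → X → ℝ) (hG : IsGMetric G)
    (a₁ a₂ a₃ a₄ : ℝ) (h₁ : 0 ≤ a₁) (h₂ : 0 ≤ a₂) (h₃ : 0 ≤ a₃) (h₄ : 0 ≤ a₄)
    (hpos : 0 < a₁ + a₂ + a₃ + a₄) (hlt : a₁ + a₂ + a₃ + a₄ < 1)
    (T : X → X)
    (hT : ∀ x y z : X, G (T x) (T y) (T z) ≤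
      a₁ * G x (T x) (T x) + a₂ * G y (T y) (T y) + a₃ * G z (T z) (T z) + a₄ * G x y z)
    (δ : X → X → ℝ)
    (hδ : ∀ x y : X, δ x y = max (G x y y) (G y x x)) :
    ∀ x y : X, δ (T x) (T y) ≤
      (a₁ + a₂ + a₃ + a₄) * max (δ x (T x)) (max (δ y (T y)) (δ x y)) := by
  intro x y
  set M := max (δ x (T x)) (max (δ y (T y)) (δ x y)) with hM
  have hxM : G x (T x) (T x) ≤ M := by
    rw [hM]
    exact le_max_of_le_left ((hδ x (T x)).symm ▸ le_max_left _ _)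
  have hyM : G y (T y) (T y) ≤ M := by
    rw [hM]
    exact le_max_of_le_right (le_max_of_le_left ((hδ y (T y)).symm ▸ le_max_left _ _))
  have hxyM : G x y y ≤ M := by
    rw [hM]
    exact le_max_of_le_right (le_max_of_le_right ((hδ x y).symm ▸ le_max_left _ _))
  have hyxM : G y x x ≤ M := by
    rw [hM]
    exact le_max_of_le_right (le_max_of_le_right ((hδ x y).symm ▸ le_max_right _ _))
  have h1 : G (T x) (T y) (T y) ≤ (a₁ + a₂ + a₃ + a₄) * M := by
    calc G (T x) (T y) (T y) ≤ a₁ * G x (T x) (T x) + a₂ * G y (T y) (T y)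
        + a₃ * G y (T y) (T y) + a₄ * G x y y := hT x y y
      _ ≤ a₁ * M + a₂ * M + a₃ * M + a₄ * M := by
          gcongr <;> assumption
      _ = (a₁ + a₂ + a₃ + a₄) * M := by ring
  have h2 : G (T y) (T x) (T x) ≤ (a₁ + a₂ + a₃ + a₄) * M := by
    calc G (T y) (T x) (T x) ≤ a₁ * G y (T y) (T y) + a₂ * G x (T x) (T x)
        + a₃ * G x (T x) (T x) + a₄ * G y x x := hT y x x
      _ ≤ a₁ * M + a₂ * M + a₃ * M + a₄ * M := by
          gcongr <;> assumption
      _ = (a₁ + a₂ + a₃ + a₄) * M := by ring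
  rw [hδ]
  exact max_le h1 h2
end

section
/- Let G be a G-metric on a nonempty set X and let T : X → X satisfy: (I) for all x ∈ X, if Tx ≠ x then T(Tx) ≠ x, and (II) there exists λ ∈ (0,1) such that G(Tx,Ty,Tz) ≤ λ·G(x,y,z) for all pairwise distinct points x, y, z ∈ X. Let u₀ ∈ X and let the Picard sequence be defined by u_{n+1} = T u_n for n ≥ 0, and assume u_n ≠ u_{n+1} for all n ≥ 0. Then for every n ≥ 0 the points u_n, u_{n+1}, u_{n+2} are pairwise distinct, G(u_n, u_{n+1}, u_{n+2}) ≤ λⁿ·G(u₀,u₁,u₂), for all m > n ≥ 0 one has G(u_n, u_m, u_m) ≤ (λⁿ/(1−λ))·G(u₀,u₁,u₂), and consequently {u_n} is a G-Cauchy sequence. -/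
open Filter

/-- Picard sequence estimates for the Banach-type contraction on pairwise distinct triples:
consecutive triples are pairwise distinct, `G (u n) (u (n+1)) (u (n+2)) ≤ λⁿ G(u₀,u₁,u₂)`,
`G (u n) (u m) (u m) ≤ (λⁿ/(1-λ)) G(u₀,u₁,u₂)` for `m > n`, and `u` is G-Cauchy. -/
theorem picard_estimates_banach {X : Type*} [Nonempty X]
    (G : X → X → X → ℝ) (hG : IsGMetric G)
    (T : X → X)
    (hI : ∀ x : X, T x ≠ x → T (T x) ≠ x)
    (lam : ℝ) (hlam0 : 0 < lam) (hlam1 : lam < 1)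
    (hII : ∀ x y z : X, x ≠ y → x ≠ z → y ≠ z →
      G (T x) (T y) (T z) ≤ lam * G x y z)
    (u : ℕ → X) (hu : ∀ n : ℕ, u (n + 1) = T (u n))
    (hne : ∀ n : ℕ, u n ≠ u (n + 1)) :
    (∀ n : ℕ, u n ≠ u (n + 1) ∧ u n ≠ u (n + 2) ∧ u (n + 1) ≠ u (n + 2)) ∧
    (∀ n : ℕ, G (u n) (u (n + 1)) (u (n + 2)) ≤ lam ^ n * G (u 0) (u 1) (u 2)) ∧
    (∀ m n : ℕ, n < m →
      G (u n) (u m) (u m) ≤ lam ^ n / (1 - lam) * G (u 0) (u 1) (u 2)) ∧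
    GCauchy G u := by
  have hG0 : 0 ≤ G (u 0) (u 1) (u 2) := hG.nonneg _ _ _
  have h1lam : 0 < 1 - lam := by linarith
  -- u n ≠ u (n+2)
  have hne2 : ∀ n : ℕ, u n ≠ u (n + 2) := by
    intro n
    have h1 : T (u n) ≠ u n := by rw [← hu n]; exact (hne n).symm
    have h2 := hI (u n) h1
    rw [← hu n, ← hu (n + 1)] at h2
    exact h2.symm
  have hpw : ∀ n : ℕ, u n ≠ u (n + 1) ∧ u n ≠ u (n + 2) ∧ u (n + 1) ≠ u (n + 2) :=
    fun n => ⟨hne n, hne2 n, hne (n + 1)⟩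
  -- triple estimate
  have htriple : ∀ n : ℕ, G (u n) (u (n + 1)) (u (n + 2)) ≤ lam ^ n * G (u 0) (u 1) (u 2) := by
    intro n
    induction n with
    | zero => simp
    | succ n ih =>
      have h := hII (u n) (u (n + 1)) (u (n + 2)) (hne n) (hne2 n) (hne (n + 1))
      rw [← hu n, ← hu (n + 1), ← hu (n + 2)] at h
      calc G (u (n + 1)) (u (n + 2)) (u (n + 3)) ≤ lam * G (u n) (u (n + 1)) (u (n + 2)) := h
        _ ≤ lam * (lam ^ n * G (u 0) (u 1) (u 2)) := by
            exact mul_le_mul_of_nonneg_left ih hlam0.le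
        _ = lam ^ (n + 1) * G (u 0) (u 1) (u 2) := by ring
  -- consecutive estimate
  have hstep : ∀ n : ℕ, G (u n) (u (n + 1)) (u (n + 1)) ≤ lam ^ n * G (u 0) (u 1) (u 2) := by
    intro n
    have e1 : G (u n) (u (n + 1)) (u (n + 1)) = G (u (n + 1)) (u (n + 1)) (u n) := by
      rw [hG.swap_left, hG.swap_right]
    have e2 := hG.le_of_ne (u (n + 1)) (u n) (u (n + 2)) (hne2 n)
    rw [e1]
    calc G (u (n + 1)) (u (n + 1)) (u n) ≤ G (u (n + 1)) (u n) (u (n + 2)) := e2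
      _ = G (u n) (u (n + 1)) (u (n + 2)) := hG.swap_left _ _ _
      _ ≤ lam ^ n * G (u 0) (u 1) (u 2) := htriple n
  -- sum estimate
  have hsum : ∀ m n : ℕ, n < m →
      G (u n) (u m) (u m) ≤ (∑ k ∈ Finset.Ico n m, lam ^ k) * G (u 0) (u 1) (u 2) := by
    intro m
    induction m with
    | zero => omega
    | succ m ih =>
      intro n hn
      rcases Nat.lt_or_ge n m with h | h
      · calc G (u n) (u (m + 1)) (u (m + 1))
            ≤ G (u n) (u m) (u m) + G (u m) (u (m + 1)) (u (m + 1)) := hG.triangle _ _ _ _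
          _ ≤ (∑ k ∈ Finset.Ico n m, lam ^ k) * G (u 0) (u 1) (u 2)
              + lam ^ m * G (u 0) (u 1) (u 2) := add_le_add (ih n h) (hstep m)
          _ = (∑ k ∈ Finset.Ico n (m + 1), lam ^ k) * G (u 0) (u 1) (u 2) := by
              rw [Finset.sum_Ico_succ_top (le_of_lt h)]; ring
      · have : n = m := by omega
        subst this
        calc G (u n) (u (n + 1)) (u (n + 1)) ≤ lam ^ n * G (u 0) (u 1) (u 2) := hstep n
          _ = (∑ k ∈ Finset.Ico n (n + 1), lam ^ k) * G (u 0) (u 1) (u 2) := by simp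
  have hgeom : ∀ m n : ℕ, n ≤ m → (∑ k ∈ Finset.Ico n m, lam ^ k) ≤ lam ^ n / (1 - lam) := by
    intro m n hnm
    rw [geom_sum_Ico (by intro h; rw [h] at hlam1; linarith : lam ≠ 1) hnm]
    have key : (lam ^ m - lam ^ n) / (lam - 1) = (lam ^ n - lam ^ m) / (1 - lam) := by
      rw [← neg_div_neg_eq]; ring_nf
    rw [key]
    exact (div_le_div_iff_of_pos_right h1lam).2 (by linarith [pow_nonneg hlam0.le m])
  have hmain : ∀ m n : ℕ, n < m →
      G (u n) (u m) (u m) ≤ lam ^ n / (1 - lam) * G (u 0) (u 1) (u 2) := by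
    intro m n hn
    calc G (u n) (u m) (u m) ≤ (∑ k ∈ Finset.Ico n m, lam ^ k) * G (u 0) (u 1) (u 2) :=
          hsum m n hn
      _ ≤ lam ^ n / (1 - lam) * G (u 0) (u 1) (u 2) :=
          mul_le_mul_of_nonneg_right (hgeom m n hn.le) hG0
  refine ⟨hpw, htriple, hmain, ?_⟩
  -- symmetry-type bound
  have hsym : ∀ x y : X, G x y y ≤ 2 * G y x x := by
    intro x y
    have e1 : G x y y = G y y x := by rw [hG.swap_left, hG.swap_right]
    have e2 : G x y x = G y x x := hG.swap_left _ _ _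
    have := hG.triangle y y x x
    rw [e2] at this
    linarith [e1 ▸ this]
  set C := 2 * (1 / (1 - lam) * G (u 0) (u 1) (u 2)) with hC
  have hCpos : 0 ≤ C := by positivity
  have hbound : ∀ p : ℕ × ℕ, G (u p.1) (u p.2) (u p.2) ≤ C * lam ^ (min p.1 p.2) := by
    rintro ⟨n, m⟩
    have hpow : ∀ k : ℕ, 0 ≤ lam ^ k := fun k => pow_nonneg hlam0.le k
    simp only
    rcases lt_trichotomy n m with h | h | h
    · have := hmain m n h
      have hmin : min n m = n := min_eq_left h.le
      rw [hmin]
      calc G (u n) (u m) (u m) ≤ lam ^ n / (1 - lam) * G (u 0) (u 1) (u 2) := this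
        _ ≤ C * lam ^ n := by rw [hC]; rw [div_eq_mul_one_div]; nlinarith [hpow n]
    · subst h
      have : G (u n) (u n) (u n) = 0 := (hG.eq_zero_iff _ _ _).2 ⟨rfl, rfl⟩
      rw [this]
      positivity
    · have h2 := hmain n m h
      have hmin : min n m = m := min_eq_right h.le
      rw [hmin]
      calc G (u n) (u m) (u m) ≤ 2 * G (u m) (u n) (u n) := hsym _ _
        _ ≤ 2 * (lam ^ m / (1 - lam) * G (u 0) (u 1) (u 2)) := by linarith
        _ ≤ C * lam ^ m := by rw [hC]; rw [div_eq_mul_one_div]; nlinarith [hpow m]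
  have hmin_tendsto : Tendsto (fun p : ℕ × ℕ => min p.1 p.2) atTop atTop := by
    apply tendsto_atTop_atTop.2
    intro b
    refine ⟨(b, b), ?_⟩
    rintro ⟨n, m⟩ ⟨h1, h2⟩
    exact le_min h1 h2
  have hpowt : Tendsto (fun k : ℕ => C * lam ^ k) atTop (nhds 0) := by
    have := tendsto_pow_atTop_nhds_zero_of_lt_one hlam0.le hlam1
    have h2 := this.const_mul C
    simpa using h2
  have hcomp : Tendsto (fun p : ℕ × ℕ => C * lam ^ (min p.1 p.2)) atTop (nhds 0) :=
    hpowt.comp hmin_tendsto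
  exact squeeze_zero (fun p => hG.nonneg _ _ _) hbound hcomp
end

section
/- Let G be a G-metric on a nonempty set X and let T : X → X satisfy: (I) for all x ∈ X, if Tx ≠ x then T(Tx) ≠ x, and (II) there exists λ ∈ (0,1/3) such that G(Tx,Ty,Tz) ≤ λ·[G(x,Tx,Tx) + G(y,Ty,Ty) + G(z,Tz,Tz)] for all pairwise distinct points x, y, z ∈ X. Let u₀ ∈ X and let the Picard sequence be defined by u_{n+1} = T u_n for n ≥ 0, and assume u_n ≠ u_{n+1} for all n ≥ 0. Then for every n ≥ 0 one has G(u_n, u_{n+1}, u_{n+2}) ≤ kⁿ·G(u₀,u₁,u₂) where k = λ/(1−2λ) ∈ (0,1), and {u_n} is a G-Cauchy sequence. -/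
open Filter

/-- Picard sequence estimates for the Kannan-type contraction on pairwise distinct triples:
with `k = λ/(1-2λ) ∈ (0,1)`, `G (u n) (u (n+1)) (u (n+2)) ≤ kⁿ G(u₀,u₁,u₂)`, and `u` is
G-Cauchy. -/
theorem picard_estimates_kannan {X : Type*} [Nonempty X]
    (G : X → X → X → ℝ) (hG : IsGMetric G)
    (T : X → X)
    (hI : ∀ x : X, T x ≠ x → T (T x) ≠ x)
    (lam : ℝ) (hlam0 : 0 < lam) (hlam1 : lam < 1 / 3)
    (hII : ∀ x y z : X, x ≠ y → x ≠ z → y ≠ z →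
      G (T x) (T y) (T z) ≤
        lam * (G x (T x) (T x) + G y (T y) (T y) + G z (T z) (T z)))
    (u : ℕ → X) (hu : ∀ n : ℕ, u (n + 1) = T (u n))
    (hne : ∀ n : ℕ, u n ≠ u (n + 1)) :
    (0 < lam / (1 - 2 * lam) ∧ lam / (1 - 2 * lam) < 1) ∧
    (∀ n : ℕ, G (u n) (u (n + 1)) (u (n + 2)) ≤
      (lam / (1 - 2 * lam)) ^ n * G (u 0) (u 1) (u 2)) ∧
    GCauchy G u := by
  have h2 : (0:ℝ) < 1 - 2 * lam := by linarith
  set k := lam / (1 - 2 * lam) with hk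
  have hk0 : 0 < k := div_pos hlam0 h2
  have hk1 : k < 1 := by rw [hk, div_lt_one h2]; linarith
  clear_value k
  have hcyc : ∀ x y z, G x y z = G z x y := fun x y z =>
    (hG.swap_right x y z).trans (hG.swap_left x z y)
  have hne2 : ∀ n, u n ≠ u (n + 2) := by
    intro n
    have h1 : T (u n) ≠ u n := by rw [← hu n]; exact (hne n).symm
    have h3 := hI (u n) h1
    rw [hu (n+1), hu n]
    exact h3.symm
  have hlow : ∀ a b c : X, a ≠ c → G a b b ≤ G a b c := by
    intro a b c h
    calc G a b b = G b b a := by rw [hG.swap_left a b b, hG.swap_right b a b]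
      _ ≤ G b a c := hG.le_of_ne b a c h
      _ = G a b c := hG.swap_left b a c
  set d : ℕ → ℝ := fun n => G (u n) (u (n+1)) (u (n+2)) with hd
  have hd0 : 0 ≤ d 0 := hG.nonneg _ _ _
  have hstep : ∀ n, d (n+1) ≤ k * d n := by
    intro n
    show G (u (n+1)) (u (n+2)) (u (n+3)) ≤ k * G (u n) (u (n+1)) (u (n+2))
    have A : G (u (n+1)) (u (n+2)) (u (n+3)) ≤
        lam * (G (u n) (u (n+1)) (u (n+1)) + G (u (n+1)) (u (n+2)) (u (n+2))
          + G (u (n+2)) (u (n+3)) (u (n+3))) := by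
      have h := hII (u n) (u (n+1)) (u (n+2)) (hne n) (hne2 n) (hne (n+1))
      simpa only [← hu n, ← hu (n+1), ← hu (n+2), show n+1+1 = n+2 from rfl,
        show n+2+1 = n+3 from rfl] using h
    have b1 : G (u n) (u (n+1)) (u (n+1)) ≤ G (u n) (u (n+1)) (u (n+2)) :=
      hlow _ _ _ (hne2 n)
    have b2 : G (u (n+1)) (u (n+2)) (u (n+2)) ≤ G (u (n+1)) (u (n+2)) (u (n+3)) :=
      hlow _ _ _ (hne2 (n+1))
    have b3 : G (u (n+2)) (u (n+3)) (u (n+3)) ≤ G (u (n+1)) (u (n+2)) (u (n+3)) := by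
      calc G (u (n+2)) (u (n+3)) (u (n+3)) ≤ G (u (n+2)) (u (n+3)) (u (n+1)) :=
            hlow _ _ _ ((hne (n+1)).symm)
        _ = G (u (n+1)) (u (n+2)) (u (n+3)) := hcyc _ _ _
    have key : lam * (G (u n) (u (n+1)) (u (n+1)) + G (u (n+1)) (u (n+2)) (u (n+2))
          + G (u (n+2)) (u (n+3)) (u (n+3)))
        ≤ lam * (G (u n) (u (n+1)) (u (n+2)) + G (u (n+1)) (u (n+2)) (u (n+3))
          + G (u (n+1)) (u (n+2)) (u (n+3))) :=
      mul_le_mul_of_nonneg_left (by linarith) hlam0.le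
    rw [hk, div_mul_eq_mul_div, le_div_iff₀ h2]
    nlinarith [A, key]
  have hgeo : ∀ n, d n ≤ k ^ n * d 0 := by
    intro n
    induction n with
    | zero => simp
    | succ n ih =>
      calc d (n+1) ≤ k * d n := hstep n
        _ ≤ k * (k ^ n * d 0) := mul_le_mul_of_nonneg_left ih hk0.le
        _ = k ^ (n+1) * d 0 := by ring
  have hsingle : ∀ n, G (u n) (u (n+1)) (u (n+1)) ≤ k ^ n * d 0 := fun n =>
    (hlow _ _ _ (hne2 n)).trans (hgeo n)
  have hchain : ∀ j n, G (u n) (u (n+j)) (u (n+j)) ≤ k ^ n / (1 - k) * d 0 := by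
    intro j
    induction j with
    | zero =>
      intro n
      have : G (u n) (u n) (u n) = 0 := (hG.eq_zero_iff _ _ _).2 ⟨rfl, rfl⟩
      simp only [Nat.add_zero, this]
      exact mul_nonneg (div_nonneg (pow_nonneg hk0.le n) (by linarith)) hd0
    | succ j ih =>
      intro n
      have e : n + (j+1) = (n+1) + j := by omega
      rw [e]
      have t := hG.triangle (u n) (u ((n+1)+j)) (u ((n+1)+j)) (u (n+1))
      have h1 := hsingle n
      have h2' := ih (n+1)
      have heq : k ^ n * d 0 + k ^ (n+1) / (1 - k) * d 0 = k ^ n / (1 - k) * d 0 := by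
        have h1k : (1:ℝ) - k ≠ 0 := by linarith
        field_simp
        ring
      linarith
  have hsymm : ∀ x y : X, G x y y ≤ 2 * G y x x := by
    intro x y
    have t := hG.triangle y y x x
    have e1 : G x y y = G y y x := by rw [hG.swap_left x y y, hG.swap_right y x y]
    have e2 : G x y x = G y x x := hG.swap_left x y x
    linarith
  have hbig : ∀ p : ℕ × ℕ, G (u p.1) (u p.2) (u p.2) ≤
      (2 / (1 - k) * d 0) * k ^ (min p.1 p.2) := by
    rintro ⟨n, m⟩
    rcases le_total n m with h | h
    · obtain ⟨j, rfl⟩ := le_iff_exists_add.1 h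
      have := hchain j n
      have hmin : min n (n+j) = n := min_eq_left (Nat.le_add_right n j)
      rw [hmin]
      have hnn : 0 ≤ k ^ n / (1 - k) * d 0 :=
        mul_nonneg (div_nonneg (pow_nonneg hk0.le n) (by linarith)) hd0
      have : (2 / (1 - k) * d 0) * k ^ n = 2 * (k ^ n / (1 - k) * d 0) := by ring
      linarith [hchain j n]
    · obtain ⟨j, rfl⟩ := le_iff_exists_add.1 h
      have h1 := hsymm (u (m+j)) (u m)
      have h2' := hchain j m
      have hmin : min (m+j) m = m := min_eq_right (Nat.le_add_right m j)
      rw [hmin]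
      have : (2 / (1 - k) * d 0) * k ^ m = 2 * (k ^ m / (1 - k) * d 0) := by ring
      linarith
  refine ⟨⟨hk0, hk1⟩, hgeo, ?_⟩
  unfold GCauchy
  have hmin : Tendsto (fun p : ℕ × ℕ => min p.1 p.2) atTop atTop := by
    rw [tendsto_atTop]
    intro b
    filter_upwards [eventually_ge_atTop (b, b)] with p hp
    exact le_min hp.1 hp.2
  have hpow : Tendsto (fun n : ℕ => (2 / (1 - k) * d 0) * k ^ n) atTop (nhds 0) := by
    have := (tendsto_pow_atTop_nhds_zero_of_lt_one hk0.le hk1).const_mul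
      (2 / (1 - k) * d 0)
    simpa using this
  exact squeeze_zero (fun p => hG.nonneg _ _ _) hbig (hpow.comp hmin)
end
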